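/- arXiv:1108.3672 — 2 statements merged into one kernel-verified Lean document; each statement's English description precedes it below -/
import Mathlib

section
/- For every r-multicomposition λ of n, the elements x_λ and u⁺_λ of the Ariki–Koike algebra H = H_{r,n} commute: x_λu⁺_λ = u⁺_λx_λ. -/
/-!
Background formalization of the Ariki–Koike algebra `H = H_{r,n}` over a field `F`,
with parameters `q, Q_1, …, Q_r` (here `Q : ℕ → F`, 1-indexed), together with the
combinatorics of multicompositions, multipartitions, tableaux, the elements
`L_k`, `T_w`, `x_λ`, `u⁺_λ`, `m_λ`, `m_{st}`, `C(m;η)`, `𝔡^{(s)}_{d,t}`, `𝔩^{(s')}`, etc.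

Multicompositions in `r` parts are encoded as functions `ℕ → List ℕ`, the component
`λ^{(s)}` (for `1 ≤ s ≤ r`) being the list `lam s` of its row lengths (so
`λ^{(s)}_i = (lam s).getD (i-1) 0` and `ρ_s(λ) = (lam s).length`).

Tableaux: a `λ`-tableau `t` is encoded by the permutation `d(t) ∈ S_n` with
`t = t^λ · d(t)`; on 1-indexed letters a permutation `w` of `Fin n` acts via `permAct`.
-/

open scoped Classical

noncomputable section

namespace AK

/-- The Coxeter length of a permutation of `{0, …, n-1}`: the number of inversions. -/
def permLen {n : ℕ} (w : Equiv.Perm (Fin n)) : ℕ :=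
  (Finset.univ.filter (fun p : Fin n × Fin n => p.1 < p.2 ∧ w p.2 < w p.1)).card

/-- Action of a permutation of `Fin n` on the 1-indexed letters `{1, …, n}`. -/
def permAct {n : ℕ} (w : Equiv.Perm (Fin n)) (a : ℕ) : ℕ :=
  if h : 1 ≤ a ∧ a ≤ n then ((w ⟨a - 1, by omega⟩ : Fin n) : ℕ) + 1 else a

/-- `λ^{(s)}_i`, the length of the `i`-th row (1-indexed) of the `s`-th component. -/
def rowEntry (lam : ℕ → List ℕ) (s i : ℕ) : ℕ := (lam s).getD (i - 1) 0

/-- `λ̄_{(i,s)} = Σ_{j=1}^{s-1} |λ^{(j)}| + Σ_{i'=1}^{i} λ^{(s)}_{i'}`;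
in particular `bar lam s 0 = λ̄_{(s)}`. -/
def bar (lam : ℕ → List ℕ) (s i : ℕ) : ℕ :=
  (∑ j ∈ Finset.range (s - 1), (lam (j + 1)).sum) + ((lam s).take i).sum

/-- `lam` is an `r`-multicomposition of `n` (canonically represented: trivial
outside components `1, …, r`). -/
def IsMulticomp (r n : ℕ) (lam : ℕ → List ℕ) : Prop :=
  (∑ s ∈ Finset.Icc 1 r, (lam s).sum) = n ∧ ∀ s, s = 0 ∨ r < s → lam s = []

/-- every component is a partition (weakly decreasing, with positive rows). -/
def IsMultipartition (lam : ℕ → List ℕ) : Prop :=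
  ∀ s, (lam s).Pairwise (· ≥ ·) ∧ ∀ x ∈ lam s, 0 < x

/-- The dominance order `λ ⊴ μ`. -/
def Dominates (lam mu : ℕ → List ℕ) : Prop := ∀ l s, bar lam l s ≤ bar mu l s

/-- Strict dominance `λ ◁ μ`. -/
def DomStrict (lam mu : ℕ → List ℕ) : Prop := Dominates lam mu ∧ lam ≠ mu

/-- The diagram `[λ]` as a finset of nodes `(i, j, k)` (row, column, component),
all 1-indexed. -/
def diagF (r n : ℕ) (lam : ℕ → List ℕ) : Finset (ℕ × ℕ × ℕ) :=
  ((Finset.Icc 1 n) ×ˢ (Finset.Icc 1 n) ×ˢ (Finset.Icc 1 r)).filter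
    (fun x => x.2.1 ≤ rowEntry lam x.2.2 x.1)

/-- The entry of the row-reading tableau `t^λ` at the node `x = (i,j,k)`. -/
def tEntry (lam : ℕ → List ℕ) (x : ℕ × ℕ × ℕ) : ℕ := bar lam x.2.2 (x.1 - 1) + x.2.1

/-- The (1-indexed) entry `a` lies in row `i` of component `s` of `t^λ`. -/
def InRow (lam : ℕ → List ℕ) (s i a : ℕ) : Prop := bar lam s (i - 1) < a ∧ a ≤ bar lam s i

/-- The (row, component) pair of the row of `t^λ` containing the entry `a`. -/
def rowcompOf (r : ℕ) (lam : ℕ → List ℕ) (a : ℕ) : ℕ × ℕ :=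
  if h : ∃ p : ℕ × ℕ, 1 ≤ p.1 ∧ 1 ≤ p.2 ∧ p.2 ≤ r ∧ InRow lam p.2 p.1 a then h.choose
  else (0, 0)

/-- `w` stabilizes the rows of `t^λ`. -/
def RowStab (r n : ℕ) (lam : ℕ → List ℕ) (w : Equiv.Perm (Fin n)) : Prop :=
  ∀ a : Fin n, ∀ s i, 1 ≤ s → s ≤ r → 1 ≤ i →
    InRow lam s i ((a : ℕ) + 1) → InRow lam s i (permAct w ((a : ℕ) + 1))

/-- The `λ`-tableau `t^λ · w` is standard (entries increase along rows and down
columns of every component). -/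
def IsStd (r n : ℕ) (lam : ℕ → List ℕ) (w : Equiv.Perm (Fin n)) : Prop :=
  (∀ x ∈ diagF r n lam, (x.1, x.2.1 + 1, x.2.2) ∈ diagF r n lam →
      permAct w (tEntry lam x) < permAct w (tEntry lam (x.1, x.2.1 + 1, x.2.2))) ∧
  (∀ x ∈ diagF r n lam, (x.1 + 1, x.2.1, x.2.2) ∈ diagF r n lam →
      permAct w (tEntry lam x) < permAct w (tEntry lam (x.1 + 1, x.2.1, x.2.2)))

/-- `w` lies in `S_{(m,η)}` (it fixes all letters outside `(m, m + |η|]`) and it keeps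
row standard the `η`-tableau with entries `m+1, …, m+|η|` entered in order along its
rows.  These permutations index the summands of `C(m ; η)`. -/
def KeepsRowStd (n m : ℕ) (eta : List ℕ) (w : Equiv.Perm (Fin n)) : Prop :=
  (∀ a : Fin n, ((a : ℕ) + 1 ≤ m ∨ m + eta.sum < (a : ℕ) + 1) → w a = a) ∧
  ∀ d j, j + 1 < eta.getD d 0 →
    permAct w (m + (eta.take d).sum + j + 1) < permAct w (m + (eta.take d).sum + j + 2)

/-- `(s, d, t) ∈ def(λ, 𝔡)`. -/
def dDef (r : ℕ) (lam : ℕ → List ℕ) (s d t : ℕ) : Prop :=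
  1 ≤ s ∧ s ≤ r ∧ 1 ≤ d ∧ d < (lam s).length ∧ 1 ≤ t ∧ t ≤ rowEntry lam s (d + 1)

/-- `s' ∈ def(λ, 𝔩)`. -/
def lDef (r : ℕ) (lam : ℕ → List ℕ) (s' : ℕ) : Prop :=
  1 ≤ s' ∧ s' ≤ r - 1 ∧ lam (s' + 1) ≠ []

/-- `S` (a function on nodes, valued in pairs `(i, k)` = (row, component)) is a
`ν`-tableau of type `λ`. -/
def IsTypeTab (r n : ℕ) (nu lam : ℕ → List ℕ) (S : ℕ × ℕ × ℕ → ℕ × ℕ) : Prop :=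
  ∀ i0 k0, 1 ≤ i0 → 1 ≤ k0 → k0 ≤ r →
    ((diagF r n nu).filter (fun x => S x = (i0, k0))).card = rowEntry lam k0 i0

/-- the order `⪯` on entries `(i,k)`. -/
def entryLE (p p' : ℕ × ℕ) : Prop := p.2 < p'.2 ∨ (p.2 = p'.2 ∧ p.1 ≤ p'.1)

/-- the strict order `≺` on entries `(i,k)`. -/
def entryLT (p p' : ℕ × ℕ) : Prop := p.2 < p'.2 ∨ (p.2 = p'.2 ∧ p.1 < p'.1)

/-- `S` is a semistandard `ν`-tableau of type `λ`, i.e. `S ∈ T₀(ν,λ)`. -/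
def IsSemistandard (r n : ℕ) (nu lam : ℕ → List ℕ) (S : ℕ × ℕ × ℕ → ℕ × ℕ) : Prop :=
  IsTypeTab r n nu lam S ∧
  (∀ x ∈ diagF r n nu, (x.1, x.2.1 + 1, x.2.2) ∈ diagF r n nu →
      entryLE (S x) (S (x.1, x.2.1 + 1, x.2.2))) ∧
  (∀ x ∈ diagF r n nu, (x.1 + 1, x.2.1, x.2.2) ∈ diagF r n nu →
      entryLT (S x) (S (x.1 + 1, x.2.1, x.2.2))) ∧
  (∀ x ∈ diagF r n nu, x.2.2 ≤ (S x).2)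

/-- `λ(t)` for the `ν`-tableau `t = t^ν · w`: the `ν`-tableau of type `λ` sending a
node `x` to the (row, component) of `t^λ` containing the entry `t(x)`. -/
def lamOf (r : ℕ) {n : ℕ} (lam nu : ℕ → List ℕ) (w : Equiv.Perm (Fin n))
    (x : ℕ × ℕ × ℕ) : ℕ × ℕ :=
  rowcompOf r lam (permAct w (tEntry nu x))

/-- `w` encodes the row-standard `λ`-tableau `t_S = t^λ · w` associated with a
`ν`-tableau `S` of type `λ`:  the tableau `t^λ · w` is row standard, and the entry
occupying node `x` in `t^ν` occupies a node in row/component `S x` of `t^λ · w`. -/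
def wSpec (r n : ℕ) (lam nu : ℕ → List ℕ) (S : ℕ × ℕ × ℕ → ℕ × ℕ)
    (w : Equiv.Perm (Fin n)) : Prop :=
  (∀ x ∈ diagF r n lam, (x.1, x.2.1 + 1, x.2.2) ∈ diagF r n lam →
      permAct w (tEntry lam x) < permAct w (tEntry lam (x.1, x.2.1 + 1, x.2.2))) ∧
  (∀ x ∈ diagF r n nu, rowcompOf r lam (permAct w⁻¹ (tEntry nu x)) = S x)

/-- The permutation `w` with `t_S = t^λ · w`. -/
def wS (r n : ℕ) (lam nu : ℕ → List ℕ) (S : ℕ × ℕ × ℕ → ℕ × ℕ) : Equiv.Perm (Fin n) :=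
  if h : ∃ w, wSpec r n lam nu S w then h.choose else 1

/-- `S^{(i,j)}_{(k,l)}`: the number of entries equal to `(i,j)` in row `k` of
component `l` of `S`. -/
def Scount (r n : ℕ) (nu : ℕ → List ℕ) (S : ℕ × ℕ × ℕ → ℕ × ℕ) (i j k l : ℕ) : ℕ :=
  ((diagF r n nu).filter (fun x => x.1 = k ∧ x.2.2 = l ∧ S x = (i, j))).card

/-- The composition `Γ_{(x,y)}` attached to `S`:
`(S^{(x,y)}_{(x,y)}, …, S^{(ρ_y(λ),y)}_{(x,y)}, S^{(1,y+1)}_{(x,y)}, …, S^{(ρ_r(λ),r)}_{(x,y)})`. -/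
def Gamma (r n : ℕ) (lam nu : ℕ → List ℕ) (S : ℕ × ℕ × ℕ → ℕ × ℕ) (x y : ℕ) : List ℕ :=
  ((List.range (r + 1 - y)).map (fun c' =>
    (List.range ((lam (y + c')).length + 1 - (if c' = 0 then x else 1))).map
      (fun i' => Scount r n nu S ((if c' = 0 then x else 1) + i') (y + c') x y))).flatten

/-- The permutation agreeing with `w` on the letters `{lo+1, …, hi}` and fixing all
other letters (when it exists). -/
def restrictPerm {n : ℕ} (w : Equiv.Perm (Fin n)) (lo hi : ℕ) : Equiv.Perm (Fin n) :=
  if h : ∃ u : Equiv.Perm (Fin n),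
      (∀ a : Fin n, (lo < (a : ℕ) + 1 ∧ (a : ℕ) + 1 ≤ hi) → u a = w a) ∧
      (∀ a : Fin n, ¬(lo < (a : ℕ) + 1 ∧ (a : ℕ) + 1 ≤ hi) → u a = a)
    then h.choose else 1

/-- The entries of the tableaux `t_{S(i)}`:  `t_{S(0)} = t_S`; and `t_{S(i+1)}` is
obtained from `t_{S(i)}` by making the entries of the first `i+1` components equal to
those of `t^λ` and relabelling the entries `x_1 < ⋯ < x_τ` of the remaining components
that are at most `ν̄_{(i+2)}` via `x_k ↦ λ̄_{(i+2)} + k`. -/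
def tabS (r n : ℕ) (lam nu : ℕ → List ℕ) (S : ℕ × ℕ × ℕ → ℕ × ℕ) :
    ℕ → (ℕ × ℕ × ℕ) → ℕ
  | 0 => fun x => permAct (wS r n lam nu S) (tEntry lam x)
  | (i + 1) => fun x =>
      if x.2.2 ≤ i + 1 then tEntry lam x
      else if tabS r n lam nu S i x ≤ bar nu (i + 2) 0 then
        bar lam (i + 2) 0 +
          ((diagF r n lam).filter (fun x' =>
            i + 1 < x'.2.2 ∧ tabS r n lam nu S i x' ≤ bar nu (i + 2) 0 ∧
              tabS r n lam nu S i x' ≤ tabS r n lam nu S i x)).card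
      else tabS r n lam nu S i x

/-- The permutation `w_{S(i)}` with `t_{S(i)} = t^λ · w_{S(i)}`. -/
def wSi (r n : ℕ) (lam nu : ℕ → List ℕ) (S : ℕ × ℕ × ℕ → ℕ × ℕ) (i : ℕ) :
    Equiv.Perm (Fin n) :=
  if h : ∃ w : Equiv.Perm (Fin n),
      ∀ x ∈ diagF r n lam, permAct w (tEntry lam x) = tabS r n lam nu S i x
    then h.choose else 1

/-- The permutation `w_i` with `t_{S(i-1)} = t_{S(i)} · w_i`. -/
def wStep (r n : ℕ) (lam nu : ℕ → List ℕ) (S : ℕ × ℕ × ℕ → ℕ × ℕ) (i : ℕ) :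
    Equiv.Perm (Fin n) :=
  if h : ∃ w : Equiv.Perm (Fin n),
      ∀ x ∈ diagF r n lam, tabS r n lam nu S (i - 1) x = permAct w (tabS r n lam nu S i x)
    then h.choose else 1

/-- The multicomposition `λ · 𝔡^{(s)}_{d,t}`. -/
def dShift (lam : ℕ → List ℕ) (s d t : ℕ) : ℕ → List ℕ := fun k =>
  if k = s then ((lam s).set (d - 1) (rowEntry lam s d + t)).set d (rowEntry lam s (d + 1) - t)
  else lam k

/-- The multicomposition `λ · 𝔩^{(s')}`. -/
def lShift (lam : ℕ → List ℕ) (s' : ℕ) : ℕ → List ℕ := fun k =>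
  if k = s' then lam s' ++ [1]
  else if k = s' + 1 then (lam (s' + 1)).set 0 (rowEntry lam (s' + 1) 1 - 1)
  else lam k

/-- The (1-indexed) entry `a` lies in component `s` of `t^λ`. -/
def InComp (lam : ℕ → List ℕ) (s a : ℕ) : Prop :=
  bar lam s 0 < a ∧ a ≤ bar lam s ((lam s).length)

/-- An algebra `H` equipped with the structure of the Ariki–Koike algebra
`H_{r,n}` with parameters `q` and `Q 1, …, Q r`: distinguished generators
`T 0, …, T (n-1)` satisfying the defining relations, together with the elements
`T_w` (determined by `T_w = T_{i_1} ⋯ T_{i_k}` for any reduced expression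
`w = s_{i_1} ⋯ s_{i_k}`). -/
structure AKPre (F : Type*) [Field F] (q : F) (r n : ℕ) (Q : ℕ → F)
    (H : Type*) [Ring H] [Algebra F H] where
  T : ℕ → H
  Tw : Equiv.Perm (Fin n) → H
  rel_T0 : ((List.range r).map (fun l => T 0 - algebraMap F H (Q (l + 1)))).prod = 0
  rel_T0T1 : 2 ≤ n → T 0 * T 1 * T 0 * T 1 = T 1 * T 0 * T 1 * T 0
  rel_quad : ∀ i, 1 ≤ i → i < n → (T i - algebraMap F H q) * (T i + 1) = 0
  rel_braid : ∀ i, 1 ≤ i → i + 1 < n → T i * T (i + 1) * T i = T (i + 1) * T i * T (i + 1)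
  rel_comm : ∀ i j, i + 1 < j → j < n → T i * T j = T j * T i
  Tw_one : Tw 1 = 1
  Tw_simple : ∀ i, 1 ≤ i → ∀ h2 : i < n,
    Tw (Equiv.swap ⟨i - 1, lt_of_le_of_lt (Nat.sub_le i 1) h2⟩ ⟨i, h2⟩) = T i
  Tw_mul : ∀ u v : Equiv.Perm (Fin n),
    permLen (u * v) = permLen u + permLen v → Tw (u * v) = Tw u * Tw v

namespace AKPre

variable {F : Type*} [Field F] {q : F} {r n : ℕ} {Q : ℕ → F}
  {H : Type*} [Ring H] [Algebra F H]

/-- The Jucys–Murphy type element `L_k = q^{1-k} T_{k-1} ⋯ T_1 T_0 T_1 ⋯ T_{k-1}`. -/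
def L (A : AKPre F q r n Q H) (k : ℕ) : H :=
  algebraMap F H (q ^ (1 - (k : ℤ))) *
    (((List.range (k - 1)).reverse.map (fun i => A.T (i + 1))).prod * A.T 0 *
      ((List.range (k - 1)).map (fun i => A.T (i + 1))).prod)

/-- `u⁺_λ = ∏_{s=2}^{r} ∏_{i=1}^{λ̄_{(s)}} (L_i − Q_s)`. -/
def uplus (A : AKPre F q r n Q H) (lam : ℕ → List ℕ) : H :=
  ((List.range (r - 1)).map (fun t =>
    ((List.range (bar lam (t + 2) 0)).map
      (fun i => A.L (i + 1) - algebraMap F H (Q (t + 2)))).prod)).prod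

/-- `x_λ`: the sum of the `T_w` over the `w ∈ S_n` stabilizing the rows of `t^λ`. -/
def x (A : AKPre F q r n Q H) (lam : ℕ → List ℕ) : H :=
  ∑ w ∈ Finset.univ.filter (fun w : Equiv.Perm (Fin n) => RowStab r n lam w), A.Tw w

/-- `m_λ = x_λ u⁺_λ`. -/
def m (A : AKPre F q r n Q H) (lam : ℕ → List ℕ) : H := A.x lam * A.uplus lam

/-- `m_{st} = T_{d(s)}^* m_λ T_{d(t)}`, where the standard tableaux `s, t` are encoded
by the permutations `u = d(s)`, `v = d(t)`. -/
def mst (A : AKPre F q r n Q H) (lam : ℕ → List ℕ) (u v : Equiv.Perm (Fin n)) : H :=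
  A.Tw u⁻¹ * A.m lam * A.Tw v

/-- The set `{m_{st} : s, t ∈ Std(μ), λ ◁ μ}` spanning `Ȟ^λ`. -/
def mstSet (A : AKPre F q r n Q H) (lam : ℕ → List ℕ) : Set H :=
  {z | ∃ mu u v, IsMulticomp r n mu ∧ IsMultipartition mu ∧ DomStrict lam mu ∧
        IsStd r n mu u ∧ IsStd r n mu v ∧ z = A.mst mu u v}

/-- The ideal `Ȟ^λ` (as a right ideal, i.e. a submodule for the right action of `H`,
encoded as a module over `Hᵐᵒᵖ`). -/
def Hcheck (A : AKPre F q r n Q H) (lam : ℕ → List ℕ) : Submodule Hᵐᵒᵖ H :=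
  Submodule.span Hᵐᵒᵖ (A.mstSet lam)

/-- The right ideal `M^λ = m_λ H`. -/
def Mmod (A : AKPre F q r n Q H) (lam : ℕ → List ℕ) : Submodule Hᵐᵒᵖ H :=
  Submodule.span Hᵐᵒᵖ {A.m lam}

/-- `C(m ; η)`. -/
def C (A : AKPre F q r n Q H) (mm : ℕ) (eta : List ℕ) : H :=
  ∑ w ∈ Finset.univ.filter (fun w : Equiv.Perm (Fin n) => KeepsRowStd n mm eta w), A.Tw w

/-- `𝔡^{(s)}_{d,t} = C(λ̄_{(d-1,s)} ; (λ^{(s)}_d, t))`. -/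
def dE (A : AKPre F q r n Q H) (lam : ℕ → List ℕ) (s d t : ℕ) : H :=
  A.C (bar lam s (d - 1)) [rowEntry lam s d, t]

/-- `𝔩^{(s')} = L_{λ̄_{(s'+1)}+1} − Q_{s'+1}`. -/
def lE (A : AKPre F q r n Q H) (lam : ℕ → List ℕ) (s' : ℕ) : H :=
  A.L (bar lam (s' + 1) 0 + 1) - algebraMap F H (Q (s' + 1))

/-- The generating set `{m_λ 𝔡^{(s)}_{d,t}} ∪ {m_λ 𝔩^{(s')}}` of the ideal `𝔍`. -/
def genSet (A : AKPre F q r n Q H) (lam : ℕ → List ℕ) : Set H :=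
  {z | (∃ s d t, dDef r lam s d t ∧ z = A.m lam * A.dE lam s d t) ∨
       (∃ s', lDef r lam s' ∧ z = A.m lam * A.lE lam s')}

/-- The right ideal `𝔍` generated by the `m_λ 𝔡^{(s)}_{d,t}` and the `m_λ 𝔩^{(s')}`. -/
def J (A : AKPre F q r n Q H) (lam : ℕ → List ℕ) : Submodule Hᵐᵒᵖ H :=
  Submodule.span Hᵐᵒᵖ (A.genSet lam)

/-- `m_{S t} = Σ_{s ∈ Std(ν), λ(s) = S} m_{s t}` for `S` a `ν`-tableau of type `λ`
(`t = t^ν · v`). -/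
def mS (A : AKPre F q r n Q H) (nu lam : ℕ → List ℕ) (S : ℕ × ℕ × ℕ → ℕ × ℕ)
    (v : Equiv.Perm (Fin n)) : H :=
  ∑ u ∈ Finset.univ.filter (fun u : Equiv.Perm (Fin n) =>
      IsStd r n nu u ∧ ∀ x ∈ diagF r n nu, lamOf r lam nu u x = S x),
    A.mst nu u v

/-- `T_S`. -/
def TS (A : AKPre F q r n Q H) (lam nu : ℕ → List ℕ) (S : ℕ × ℕ × ℕ → ℕ × ℕ) : H :=
  A.Tw (wS r n lam nu S)

/-- `∏_{y=1}^{r} ∏_{x=1}^{ρ_y(ν)} C(ν̄_{(x−1,y)} ; Γ_{(x,y)})`. -/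
def bigC (A : AKPre F q r n Q H) (lam nu : ℕ → List ℕ) (S : ℕ × ℕ × ℕ → ℕ × ℕ) : H :=
  ((List.range r).map (fun y' =>
    ((List.range ((nu (y' + 1)).length)).map (fun x' =>
      A.C (bar nu (y' + 1) x') (Gamma r n lam nu S (x' + 1) (y' + 1)))).prod)).prod

/-- `T_{S^{(s)}}`, where `w_s` is the cycle-factor of the permutation of `t_S`
supported on the letters of the `s`-th component. -/
def TScomp (A : AKPre F q r n Q H) (lam nu : ℕ → List ℕ) (S : ℕ × ℕ × ℕ → ℕ × ℕ)
    (s : ℕ) : H :=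
  A.Tw (restrictPerm (wS r n lam nu S) (bar lam s 0) (bar lam s ((lam s).length)))

/-- `T_{S(i)}`. -/
def TSi (A : AKPre F q r n Q H) (lam nu : ℕ → List ℕ) (S : ℕ × ℕ × ℕ → ℕ × ℕ)
    (i : ℕ) : H :=
  A.Tw (wSi r n lam nu S i)

/-- `D(t,s) = T_{t-1} T_{t-2} ⋯ T_s` (with `D(s,s) = 1`). -/
def D (A : AKPre F q r n Q H) (t s : ℕ) : H :=
  ((List.range (t - s)).reverse.map (fun j => A.T (s + j))).prod

/-- `ū⁺_{α^{(i)}} = ∏_{j=2}^{i+1} ∏_{k=1}^{ᾱ_{(j)}} (L_k − Q_j)`. -/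
def ubar (A : AKPre F q r n Q H) (al : ℕ → List ℕ) (i : ℕ) : H :=
  ((List.range i).map (fun t =>
    ((List.range (bar al (t + 2) 0)).map
      (fun k => A.L (k + 1) - algebraMap F H (Q (t + 2)))).prod)).prod

/-- `u̲⁺_{α^{(i)}} = ∏_{j=i+1}^{r} ∏_{k=1}^{ᾱ_{(j)}} (L_k − Q_j)`. -/
def ulow (A : AKPre F q r n Q H) (al : ℕ → List ℕ) (i : ℕ) : H :=
  ((List.range (r - i)).map (fun t =>
    ((List.range (bar al (i + 1 + t) 0)).map
      (fun k => A.L (k + 1) - algebraMap F H (Q (i + 1 + t)))).prod)).prod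

/-- `u⁺_{γ^{(i)} \ α^{(i)}} = ∏_{j=ᾱ_{(i+1)}+1}^{γ̄_{(i+1)}} (L_j − Q_{i+1})`. -/
def udiff (A : AKPre F q r n Q H) (ga al : ℕ → List ℕ) (i : ℕ) : H :=
  ((List.range (bar ga (i + 1) 0 - bar al (i + 1) 0)).map
    (fun t => A.L (bar al (i + 1) 0 + 1 + t) - algebraMap F H (Q (i + 1)))).prod

/-- The family `{m_{st}}`, over all multipartitions of `n` and all pairs of standard
tableaux, is an `F`-basis of `H` (this characterizes the Ariki–Koike algebra among
the algebras whose generators satisfy the defining relations). -/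
def IsCellular (A : AKPre F q r n Q H) : Prop :=
  Submodule.span F {z : H | ∃ lam u v, IsMulticomp r n lam ∧ IsMultipartition lam ∧
      IsStd r n lam u ∧ IsStd r n lam v ∧ z = A.mst lam u v} = ⊤ ∧
  LinearIndependent F
    (fun p : {p : (ℕ → List ℕ) × Equiv.Perm (Fin n) × Equiv.Perm (Fin n) //
        IsMulticomp r n p.1 ∧ IsMultipartition p.1 ∧ IsStd r n p.1 p.2.1 ∧
          IsStd r n p.1 p.2.2} =>
      A.mst p.1.1 p.1.2.1 p.1.2.2)

theorem mul_mem_Mmod (A : AKPre F q r n Q H) (lam : ℕ → List ℕ) (h : H) :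
    A.m lam * h ∈ A.Mmod lam := by
  have e : A.m lam * h = (MulOpposite.op h) • A.m lam := rfl
  rw [e]
  exact Submodule.smul_mem _ _ (Submodule.mem_span_singleton_self _)

end AKPre

/-- The Ariki–Koike algebra `H_{r,n}`: an algebra with generators satisfying the
defining relations, for which the elements `m_{st}` form an `F`-basis. -/
structure AKAlg (F : Type*) [Field F] (q : F) (r n : ℕ) (Q : ℕ → F)
    (H : Type*) [Ring H] [Algebra F H] extends AKPre F q r n Q H where
  cellular : toAKPre.IsCellular

end AK


/-! ### Auxiliary development for Statement 3 -/

namespace AKProof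
open AK

/-! #### Pure monoid/ring word lemmas -/

section Words
variable {M : Type*} [Monoid M]

theorem key3 (a b x : M) (hb : a * b * a = b * a * b) (hx : b * x = x * b) :
    a * (b * (a * x * a) * b) = b * (a * x * a) * b * a := by
  have hb' : ∀ t, a * (b * (a * t)) = b * (a * (b * t)) := fun t => by
    rw [← mul_assoc, ← mul_assoc, hb, mul_assoc, mul_assoc]
  have hx' : ∀ t, b * (x * t) = x * (b * t) := fun t => by
    rw [← mul_assoc, hx, mul_assoc]
  have hbr : a * (b * a) = b * (a * b) := by rw [← mul_assoc, hb, mul_assoc]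
  simp only [mul_assoc]
  rw [hb' (x * (a * b)), hx' (a * b), ← hbr]

theorem key4 (a b x : M) (hb : a * b * a = b * a * b) (hx : b * x = x * b)
    (IH : a * x * a * x = x * a * x * a) :
    b * (a * x * a) * b * (a * x * a) = a * x * a * b * (a * x * a) * b := by
  have hb' : ∀ t, a * (b * (a * t)) = b * (a * (b * t)) := fun t => by
    simp only [← mul_assoc]; rw [hb]
  have hx' : ∀ t, b * (x * t) = x * (b * t) := fun t => by
    simp only [← mul_assoc]; rw [hx]
  have IH' : ∀ t, a * (x * (a * (x * t))) = x * (a * (x * (a * t))) := fun t => by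
    simp only [← mul_assoc]; rw [IH]
  have hb'' : ∀ t, b * (a * (b * t)) = a * (b * (a * t)) := fun t => (hb' t).symm
  have hx'' : ∀ t, x * (b * t) = b * (x * t) := fun t => (hx' t).symm
  have hbr : a * (b * a) = b * (a * b) := by simp only [← mul_assoc]; rw [hb]
  simp only [mul_assoc]
  conv_lhs => rw [hb' (x * a), hx' a, hx'' (a * (x * (b * a))),
    hb'' (x * (a * (x * (b * a)))), IH' (b * a)]
  conv_rhs => rw [hb' (x * (a * b)), hx' (a * b), hx'' (a * (x * (b * (a * b)))), ← hbr]

end Words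

section RingWords
variable {R : Type*} [Ring R]

theorem sum_key (a m u : R) (hu : ∀ z : R, u * z = z * u)
    (haa : a * a + a = u * a + u) :
    a * (u * m + a * m * a) = (u * m + a * m * a) * a := by
  have haa' : a * a = u * a + u - a := eq_sub_of_add_eq haa
  have hL : a * (u * m + a * m * a)
      = u * (a * m) + (u * (a * (m * a)) + u * (m * a) - a * (m * a)) := by
    calc a * (u * m + a * m * a) = a * u * m + (a * a) * (m * a) := by noncomm_ring
      _ = u * a * m + (u * a + u - a) * (m * a) := by rw [← hu a, haa']
      _ = u * (a * m) + (u * (a * (m * a)) + u * (m * a) - a * (m * a)) := by noncomm_ring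
  have hR : (u * m + a * m * a) * a
      = u * (m * a) + (u * (a * m) * a + u * (a * m) - (a * m) * a) := by
    calc (u * m + a * m * a) * a = u * (m * a) + (a * m) * (a * a) := by noncomm_ring
      _ = u * (m * a) + (a * m) * (u * a + u - a) := by rw [haa']
      _ = u * (m * a) + ((a * m) * u * a + (a * m) * u - (a * m) * a) := by noncomm_ring
      _ = u * (m * a) + (u * (a * m) * a + u * (a * m) - (a * m) * a) := by rw [← hu (a * m)]
  rw [hL, hR]; noncomm_ring

theorem prod_key (a m : R) (h4 : a * m * a * m = m * a * m * a) :
    a * (m * (a * m * a)) = m * (a * m * a) * a := by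
  have h1 : a * (m * (a * m * a)) = (a * m * a * m) * a := by noncomm_ring
  rw [h1, h4]; noncomm_ring

end RingWords

/-! #### Combinatorics of rows -/

section Comb
variable {r n : ℕ} {lam : ℕ → List ℕ}

theorem take_sum_mono (l : List ℕ) {i j : ℕ} (h : i ≤ j) :
    (l.take i).sum ≤ (l.take j).sum := by
  have hj : j = i + (j - i) := by omega
  rw [hj, List.take_add, List.sum_append]
  exact Nat.le_add_right _ _

theorem take_sum_le (l : List ℕ) (i : ℕ) : (l.take i).sum ≤ l.sum := by
  conv_rhs => rw [← List.take_append_drop i l]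
  rw [List.sum_append]
  exact Nat.le_add_right _ _

theorem bar_mono {s i j : ℕ} (h : i ≤ j) : bar lam s i ≤ bar lam s j :=
  Nat.add_le_add_left (take_sum_mono _ h) _

theorem bar_next {s : ℕ} (hs : 1 ≤ s) (i : ℕ) : bar lam s i ≤ bar lam (s + 1) 0 := by
  obtain ⟨m, rfl⟩ : ∃ m, s = m + 1 := ⟨s - 1, by omega⟩
  unfold AK.bar
  simp only [List.take_zero, List.sum_nil, add_zero, Nat.add_sub_cancel]
  rw [Finset.sum_range_succ]
  exact Nat.add_le_add_left (take_sum_le _ _) _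

theorem bar_top {s : ℕ} (hs : 1 ≤ s) :
    bar lam s (lam s).length = bar lam (s + 1) 0 := by
  obtain ⟨m, rfl⟩ : ∃ m, s = m + 1 := ⟨s - 1, by omega⟩
  unfold AK.bar
  simp only [List.take_length, List.take_zero, List.sum_nil, add_zero, Nat.add_sub_cancel]
  rw [Finset.sum_range_succ]

theorem bar0_mono {s s' : ℕ} (h : s ≤ s') : bar lam s 0 ≤ bar lam s' 0 := by
  unfold AK.bar
  simp only [List.take_zero, List.sum_nil, add_zero]
  exact Finset.sum_le_sum_of_subset (Finset.range_subset_range.2 (by omega))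

theorem bar_le_lt {s k s' k' : ℕ} (hs : 1 ≤ s)
    (hlex : s < s' ∨ (s = s' ∧ k < k')) : bar lam s k ≤ bar lam s' (k' - 1) := by
  rcases hlex with h | ⟨rfl, h⟩
  · exact le_trans (bar_next hs k) (le_trans (bar0_mono (by omega)) (bar_mono (Nat.zero_le _)))
  · exact bar_mono (by omega)

theorem row_unique {s k s' k' x : ℕ} (hs : 1 ≤ s) (hs' : 1 ≤ s')
    (h1 : InRow lam s k x) (h2 : InRow lam s' k' x) : s = s' ∧ k = k' := by
  obtain ⟨h1a, h1b⟩ := h1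
  obtain ⟨h2a, h2b⟩ := h2
  by_contra hc
  have hlex : (s < s' ∨ (s = s' ∧ k < k')) ∨ (s' < s ∨ (s' = s ∧ k' < k)) := by omega
  rcases hlex with h | h
  · have := bar_le_lt (lam := lam) hs h; omega
  · have := bar_le_lt (lam := lam) hs' h; omega

theorem ivt (f : ℕ → ℕ) (x : ℕ) :
    ∀ m, f 0 < x → x ≤ f m → ∃ k, k < m ∧ f k < x ∧ x ≤ f (k + 1) := by
  intro m
  induction m with
  | zero => intro h0 hm; omega
  | succ m ih =>
    intro h0 hm
    by_cases hx : x ≤ f m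
    · obtain ⟨k, hk, h⟩ := ih h0 hx
      exact ⟨k, by omega, h⟩
    · exact ⟨m, by omega, by omega, hm⟩

theorem bar_one0 : bar lam 1 0 = 0 := by simp [AK.bar]

theorem bar_rp1 (hlam : IsMulticomp r n lam) : bar lam (r + 1) 0 = n := by
  unfold AK.bar
  simp only [List.take_zero, List.sum_nil, add_zero, Nat.add_sub_cancel]
  rw [← hlam.1]
  rw [show Finset.Icc 1 r = Finset.Ico 1 (r + 1) by rw [Finset.Ico_add_one_right_eq_Icc],
    Finset.sum_Ico_eq_sum_range]
  simp only [Nat.add_sub_cancel]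
  exact Finset.sum_congr rfl fun j _ => by rw [Nat.add_comm]

theorem row_exists (hlam : IsMulticomp r n lam) {x : ℕ} (h1 : 1 ≤ x) (h2 : x ≤ n) :
    ∃ s k, 1 ≤ s ∧ s ≤ r ∧ 1 ≤ k ∧ InRow lam s k x := by
  obtain ⟨s0, hs0r, hs0a, hs0b⟩ := ivt (fun j => bar lam (j + 1) 0) x r
    (by show bar lam 1 0 < x; rw [bar_one0]; omega)
    (by show x ≤ bar lam (r + 1) 0; rw [bar_rp1 hlam]; omega)
  have hx2 : x ≤ bar lam (s0 + 1) (lam (s0 + 1)).length := by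
    rw [bar_top (by omega)]
    exact hs0b
  obtain ⟨k0, hk0, hka, hkb⟩ := ivt (fun i => bar lam (s0 + 1) i) x (lam (s0 + 1)).length
    hs0a hx2
  refine ⟨s0 + 1, k0 + 1, by omega, by omega, by omega, ?_, hkb⟩
  simpa using hka

theorem not_boundary {s k m t : ℕ} (hs : 1 ≤ s)
    (h1 : InRow lam s k m) (h2 : InRow lam s k (m + 1)) : bar lam (t + 2) 0 ≠ m := by
  intro he
  have hm1 : bar lam s 0 < m := lt_of_le_of_lt (bar_mono (Nat.zero_le _)) h1.1
  have hm2 : m + 1 ≤ bar lam (s + 1) 0 := le_trans h2.2 (bar_next hs _)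
  have hss : s < t + 2 := by
    by_contra hc
    have := bar0_mono (lam := lam) (show t + 2 ≤ s by omega)
    omega
  have := bar0_mono (lam := lam) (show s + 1 ≤ t + 2 by omega)
  omega

end Comb

/-! #### Permutation action and lengths -/

section Perms
variable {n : ℕ}

theorem permAct_eq (w : Equiv.Perm (Fin n)) {x : ℕ} (h : 1 ≤ x ∧ x ≤ n) :
    permAct w x = ((w ⟨x - 1, by omega⟩ : Fin n) : ℕ) + 1 := by
  unfold AK.permAct
  rw [dif_pos h]

theorem permAct_bounds (w : Equiv.Perm (Fin n)) {x : ℕ} (h : 1 ≤ x ∧ x ≤ n) :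
    1 ≤ permAct w x ∧ permAct w x ≤ n := by
  rw [permAct_eq w h]
  have := (w ⟨x - 1, by omega⟩).isLt
  omega

theorem permAct_mul (u v : Equiv.Perm (Fin n)) (x : ℕ) :
    permAct (u * v) x = permAct u (permAct v x) := by
  by_cases h : 1 ≤ x ∧ x ≤ n
  · have hb := permAct_bounds v h
    rw [permAct_eq (u * v) h, permAct_eq v h, permAct_eq u (by omega)]
    have : (⟨((v ⟨x - 1, by omega⟩ : Fin n) : ℕ) + 1 - 1, by omega⟩ : Fin n)
        = v ⟨x - 1, by omega⟩ := by
      apply Fin.ext; simp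
    rw [this]
    rfl
  · unfold AK.permAct
    rw [dif_neg h, dif_neg h, dif_neg h]

theorem rowStab_mul {r : ℕ} {lam : ℕ → List ℕ} {u v : Equiv.Perm (Fin n)}
    (hu : RowStab r n lam u) (hv : RowStab r n lam v) : RowStab r n lam (u * v) := by
  intro a s i h1 h2 h3 h4
  have h5 := hv a s i h1 h2 h3 h4
  rw [permAct_mul]
  have hb := permAct_bounds v (x := (a : ℕ) + 1) ⟨by omega, by have := a.isLt; omega⟩
  have hy : permAct v ((a : ℕ) + 1)
      = ((⟨permAct v ((a : ℕ) + 1) - 1, by omega⟩ : Fin n) : ℕ) + 1 := by simp; omega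
  rw [hy] at h5 ⊢
  exact hu _ s i h1 h2 h3 h5

theorem permLen_strictMono {w : Equiv.Perm (Fin n)} (hs : StrictMono w) :
    permLen w = 0 := by
  unfold AK.permLen
  rw [Finset.card_eq_zero, Finset.filter_eq_empty_iff]
  rintro p -
  rintro ⟨h1, h2⟩
  exact absurd (hs h1) (not_lt.2 h2.le)

theorem strictMono_of_adj {w : Fin n → Fin n}
    (h : ∀ a0 (ha : a0 + 1 < n), w ⟨a0, by omega⟩ < w ⟨a0 + 1, ha⟩) : StrictMono w := by
  have key : ∀ d (i j : Fin n), (j : ℕ) = (i : ℕ) + d + 1 → w i < w j := by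
    intro d
    induction d with
    | zero =>
      intro i j hj
      have hlt : (i : ℕ) + 1 < n := by have := j.isLt; omega
      have ej : j = ⟨(i : ℕ) + 1, hlt⟩ := Fin.ext (show (j : ℕ) = (i : ℕ) + 1 by omega)
      rw [ej]
      exact h (i : ℕ) hlt
    | succ d ih =>
      intro i j hj
      have hmid : (i : ℕ) + d + 1 < n := by have := j.isLt; omega
      have hlt : ((i : ℕ) + d + 1) + 1 < n := by have := j.isLt; omega
      refine lt_trans (ih i ⟨(i : ℕ) + d + 1, hmid⟩ rfl) ?_
      have ej : j = ⟨((i : ℕ) + d + 1) + 1, hlt⟩ :=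
        Fin.ext (show (j : ℕ) = ((i : ℕ) + d + 1) + 1 by omega)
      rw [ej]
      exact h ((i : ℕ) + d + 1) hlt
  intro i j hij
  exact key ((j : ℕ) - (i : ℕ) - 1) i j (by have := (Fin.lt_def.1 hij); omega)

theorem permLen_zero {w : Equiv.Perm (Fin n)} (h : permLen w = 0) : w = 1 := by
  have hs : StrictMono w := by
    intro i j hij
    rcases lt_trichotomy (w i) (w j) with hc | hc | hc
    · exact hc
    · exact absurd (w.injective hc) (ne_of_lt hij)
    · exfalso
      have hmem : (i, j) ∈ (Finset.univ.filter
          (fun p : Fin n × Fin n => p.1 < p.2 ∧ w p.2 < w p.1)) := by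
        simp only [Finset.mem_filter, Finset.mem_univ, true_and]
        exact ⟨hij, hc⟩
      rw [Finset.card_eq_zero.1 h] at hmem
      exact absurd hmem (Finset.notMem_empty _)
  have hrange : Set.range ⇑w = Set.range (id : Fin n → Fin n) := by
    rw [w.surjective.range_eq, Set.range_id]
  have := (StrictMono.range_inj hs strictMono_id).1 hrange
  exact Equiv.ext fun x => congrFun this x

theorem exists_descent {w : Equiv.Perm (Fin n)} (h : permLen w ≠ 0) :
    ∃ a0, ∃ (ha : a0 + 1 < n), w ⟨a0 + 1, ha⟩ < w ⟨a0, by omega⟩ := by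
  by_contra hc
  push_neg at hc
  apply h
  apply permLen_strictMono
  apply strictMono_of_adj
  intro a0 ha
  have hle : w ⟨a0, by omega⟩ ≤ w ⟨a0 + 1, ha⟩ := hc a0 ha
  rcases lt_or_eq_of_le hle with h1 | h1
  · exact h1
  · exfalso
    have h2 := w.injective h1
    have h3 : a0 = a0 + 1 := congrArg Fin.val h2
    omega


variable {a0 : ℕ} (ha : a0 + 1 < n)

theorem permAct_swap_fst :
    permAct (Equiv.swap (⟨a0, by omega⟩ : Fin n) ⟨a0 + 1, ha⟩) (a0 + 1) = a0 + 2 := by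
  rw [permAct_eq _ ⟨by omega, by omega⟩]
  have : (⟨a0 + 1 - 1, by omega⟩ : Fin n) = ⟨a0, by omega⟩ := by apply Fin.ext; simp
  rw [this, Equiv.swap_apply_left]

theorem permAct_swap_snd :
    permAct (Equiv.swap (⟨a0, by omega⟩ : Fin n) ⟨a0 + 1, ha⟩) (a0 + 2) = a0 + 1 := by
  rw [permAct_eq _ ⟨by omega, by omega⟩]
  have : (⟨a0 + 2 - 1, by omega⟩ : Fin n) = ⟨a0 + 1, ha⟩ := by apply Fin.ext; simp
  rw [this, Equiv.swap_apply_right]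

theorem permAct_swap_other {x : ℕ} (hx1 : x ≠ a0 + 1) (hx2 : x ≠ a0 + 2) :
    permAct (Equiv.swap (⟨a0, by omega⟩ : Fin n) ⟨a0 + 1, ha⟩) x = x := by
  by_cases h : 1 ≤ x ∧ x ≤ n
  · rw [permAct_eq _ h]
    rw [Equiv.swap_apply_of_ne_of_ne]
    · simp; omega
    · intro hc; apply hx1; have := congrArg Fin.val hc; simp at this; omega
    · intro hc; apply hx2; have := congrArg Fin.val hc; simp at this; omega
  · unfold AK.permAct; rw [dif_neg h]

theorem swap_val (z : Fin n) :
    ((Equiv.swap (⟨a0, by omega⟩ : Fin n) ⟨a0 + 1, ha⟩ z : Fin n) : ℕ)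
      = if (z : ℕ) = a0 then a0 + 1 else if (z : ℕ) = a0 + 1 then a0 else (z : ℕ) := by
  rcases eq_or_ne z ⟨a0, by omega⟩ with rfl | h1
  · rw [Equiv.swap_apply_left, if_pos rfl]
  · rcases eq_or_ne z ⟨a0 + 1, ha⟩ with rfl | h2
    · rw [Equiv.swap_apply_right, if_neg (show a0 + 1 ≠ a0 by omega), if_pos rfl]
    · rw [Equiv.swap_apply_of_ne_of_ne h1 h2,
        if_neg (fun hcc => h1 (Fin.ext hcc)), if_neg (fun hcc => h2 (Fin.ext hcc))]

theorem swap_adj_lt {p1 p2 : Fin n} (h12 : p1 < p2)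
    (hne : ¬(p1 = ⟨a0, by omega⟩ ∧ p2 = ⟨a0 + 1, ha⟩)) :
    Equiv.swap (⟨a0, by omega⟩ : Fin n) ⟨a0 + 1, ha⟩ p1
      < Equiv.swap (⟨a0, by omega⟩ : Fin n) ⟨a0 + 1, ha⟩ p2 := by
  have h12' := Fin.lt_def.1 h12
  have hne' : ¬((p1 : ℕ) = a0 ∧ (p2 : ℕ) = a0 + 1) := fun hcc =>
    hne ⟨Fin.ext hcc.1, Fin.ext hcc.2⟩
  have h1n := p1.isLt
  have h2n := p2.isLt
  rw [Fin.lt_def, swap_val ha p1, swap_val ha p2]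
  split_ifs <;> omega

theorem permLen_swap : permLen (Equiv.swap (⟨a0, by omega⟩ : Fin n) ⟨a0 + 1, ha⟩) = 1 := by
  set p : Fin n := ⟨a0, by omega⟩ with hp
  set p' : Fin n := ⟨a0 + 1, ha⟩ with hp'
  set σ := Equiv.swap p p' with hσ
  unfold AK.permLen
  rw [Finset.card_eq_one]
  refine ⟨(p, p'), ?_⟩
  ext pp
  simp only [Finset.mem_filter, Finset.mem_univ, true_and, Finset.mem_singleton]
  constructor
  · rintro ⟨h1, h2⟩
    by_contra hne
    have hne' : ¬(pp.1 = p ∧ pp.2 = p') := by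
      intro hcc; exact hne (Prod.ext hcc.1 hcc.2)
    exact absurd h2 (not_lt.2 (swap_adj_lt ha h1 hne').le)
  · rintro rfl
    constructor
    · exact Fin.mk_lt_mk.2 (by omega)
    · rw [Equiv.swap_apply_left, Equiv.swap_apply_right]
      exact Fin.mk_lt_mk.2 (by omega)

theorem permLen_descent {w : Equiv.Perm (Fin n)}
    (hd : w ⟨a0 + 1, ha⟩ < w ⟨a0, by omega⟩) :
    permLen w = permLen (w * Equiv.swap (⟨a0, by omega⟩ : Fin n) ⟨a0 + 1, ha⟩) + 1 := by
  set p : Fin n := ⟨a0, by omega⟩ with hp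
  set p' : Fin n := ⟨a0 + 1, ha⟩ with hp'
  set σ := Equiv.swap p p' with hσ
  set v := w * σ with hv
  have happ : ∀ z, v z = w (σ z) := fun z => rfl
  set Iw := Finset.univ.filter (fun pr : Fin n × Fin n => pr.1 < pr.2 ∧ w pr.2 < w pr.1)
    with hIw
  have hmem : (p, p') ∈ Iw := by
    simp only [hIw, Finset.mem_filter, Finset.mem_univ, true_and]
    exact ⟨Fin.mk_lt_mk.2 (by omega), hd⟩
  have hcard : permLen v = (Iw.erase (p, p')).card := by
    apply Finset.card_bij' (fun pr _ => (σ pr.1, σ pr.2)) (fun pr _ => (σ pr.1, σ pr.2))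
    · rintro pr hpr
      simp only [Finset.mem_filter, Finset.mem_univ, true_and] at hpr
      obtain ⟨h1, h2⟩ := hpr
      rw [happ, happ] at h2
      have hne : ¬(pr.1 = p ∧ pr.2 = p') := by
        rintro ⟨e1, e2⟩
        rw [e1, e2] at h2
        rw [Equiv.swap_apply_left, Equiv.swap_apply_right] at h2
        exact absurd hd (not_lt.2 h2.le)
      have hlt := swap_adj_lt ha h1 hne
      rw [Finset.mem_erase]
      constructor
      · intro hcc
        have e1 : σ pr.1 = p := congrArg Prod.fst hcc
        have e2 : σ pr.2 = p' := congrArg Prod.snd hcc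
        have f1 : pr.1 = σ p := by rw [← e1, Equiv.swap_apply_self]
        have f2 : pr.2 = σ p' := by rw [← e2, Equiv.swap_apply_self]
        rw [Equiv.swap_apply_left] at f1
        rw [Equiv.swap_apply_right] at f2
        rw [f1, f2] at h1
        exact absurd h1 (by simp [hp, hp', Fin.lt_def])
      · simp only [hIw, Finset.mem_filter, Finset.mem_univ, true_and]
        exact ⟨hlt, h2⟩
    · rintro pr hpr
      rw [Finset.mem_erase] at hpr
      obtain ⟨hne, hpr⟩ := hpr
      simp only [hIw, Finset.mem_filter, Finset.mem_univ, true_and] at hpr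
      obtain ⟨h1, h2⟩ := hpr
      have hne' : ¬(pr.1 = p ∧ pr.2 = p') := by
        rintro ⟨e1, e2⟩; exact hne (Prod.ext e1 e2)
      have hlt := swap_adj_lt ha h1 hne'
      simp only [Finset.mem_filter, Finset.mem_univ, true_and]
      refine ⟨hlt, ?_⟩
      rw [happ, happ, Equiv.swap_apply_self, Equiv.swap_apply_self]
      exact h2
    · rintro pr _; exact Prod.ext (Equiv.swap_apply_self _ _ _) (Equiv.swap_apply_self _ _ _)
    · rintro pr _; exact Prod.ext (Equiv.swap_apply_self _ _ _) (Equiv.swap_apply_self _ _ _)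
  have hone := Finset.card_erase_add_one hmem
  have hw' : permLen w = Iw.card := by unfold AK.permLen; rw [hIw]
  have hv' : permLen v = (Iw.erase (p, p')).card := hcard
  omega

end Perms

/-! #### Algebra computations -/

section Alg
variable {F : Type*} [Field F] {q : F} {r n : ℕ} {Q : ℕ → F}
  {H : Type*} [Ring H] [Algebra F H]

/-- The unscaled Murphy element. -/
def Mel (A : AKPre F q r n Q H) (k : ℕ) : H :=
  ((List.range (k - 1)).reverse.map (fun i => A.T (i + 1))).prod * A.T 0 *
    ((List.range (k - 1)).map (fun i => A.T (i + 1))).prod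

theorem L_eq_Mel (A : AKPre F q r n Q H) (k : ℕ) :
    A.L k = algebraMap F H (q ^ (1 - (k : ℤ))) * Mel A k := rfl

theorem Mel_one (A : AKPre F q r n Q H) : Mel A 1 = A.T 0 := by
  simp [Mel]

theorem Mel_succ (A : AKPre F q r n Q H) {k : ℕ} (hk : 1 ≤ k) :
    Mel A (k + 1) = A.T k * Mel A k * A.T k := by
  obtain ⟨m, rfl⟩ : ∃ m, k = m + 1 := ⟨k - 1, by omega⟩
  unfold Mel
  simp only [Nat.add_sub_cancel, List.range_succ, List.reverse_append, List.map_append,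
    List.map_cons, List.map_nil, List.prod_append, List.prod_cons, List.prod_nil,
    List.reverse_cons, List.reverse_nil, List.nil_append, List.cons_append, mul_one]
  noncomm_ring


variable (A : AKPre F q r n Q H)

theorem hc_comm (y : H) (x : F) : Commute y (algebraMap F H x) :=
  (Algebra.commutes x y).symm

theorem T_comm_Mel_low {i k : ℕ} (hk : 1 ≤ k) (hki : k < i) (hi : i < n) :
    Commute (A.T i) (Mel A k) := by
  unfold Mel
  have hmem : ∀ y ∈ ((List.range (k - 1)).map (fun j => A.T (j + 1))),
      Commute (A.T i) y := by
    intro y hy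
    rw [List.mem_map] at hy
    obtain ⟨j, hj, rfl⟩ := hy
    rw [List.mem_range] at hj
    exact ((A.rel_comm (j + 1) i (by omega) hi)).symm
  have hmemr : ∀ y ∈ ((List.range (k - 1)).reverse.map (fun j => A.T (j + 1))),
      Commute (A.T i) y := by
    intro y hy
    rw [List.mem_map] at hy
    obtain ⟨j, hj, rfl⟩ := hy
    rw [List.mem_reverse, List.mem_range] at hj
    exact ((A.rel_comm (j + 1) i (by omega) hi)).symm
  refine Commute.mul_right (Commute.mul_right ?_ ?_) ?_
  · exact Commute.list_prod_right _ _ hmemr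
  · exact (A.rel_comm 0 i (by omega) hi).symm
  · exact Commute.list_prod_right _ _ hmem

theorem T_comm_Mel_high {i k : ℕ} (hi : 1 ≤ i) (hik : i + 1 < k) (hk : k ≤ n) :
    Commute (A.T i) (Mel A k) := by
  have main : ∀ d, i + 2 + d ≤ n → Commute (A.T i) (Mel A (i + 2 + d)) := by
    intro d
    induction d with
    | zero =>
      intro hkn
      have h2 : i + 1 < n := by omega
      rw [show i + 2 + 0 = (i + 1) + 1 from rfl, Mel_succ A (by omega), Mel_succ A hi]
      have hb := A.rel_braid i hi h2
      have hx : Commute (A.T (i + 1)) (Mel A i) := T_comm_Mel_low A hi (by omega) h2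
      exact key3 (A.T i) (A.T (i + 1)) (Mel A i) hb hx
    | succ d ih =>
      intro hkn
      have hstep : i + 2 + (d + 1) = (i + 2 + d) + 1 := rfl
      rw [hstep, Mel_succ A (by omega)]
      have hT : Commute (A.T i) (A.T (i + 2 + d)) :=
        A.rel_comm i (i + 2 + d) (by omega) (by omega)
      exact Commute.mul_right (Commute.mul_right hT (ih (by omega))) hT
  obtain ⟨d, rfl⟩ : ∃ d, k = i + 2 + d := ⟨k - (i + 2), by omega⟩
  exact main d hk

theorem TMTM {i : ℕ} (h1 : 1 ≤ i) (h2 : i < n) :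
    A.T i * Mel A i * A.T i * Mel A i = Mel A i * A.T i * Mel A i * A.T i := by
  revert h2
  induction i, h1 using Nat.le_induction with
  | base =>
    intro h2
    rw [Mel_one]
    exact (A.rel_T0T1 (by omega)).symm
  | succ i hi ih =>
    intro h2
    have ihh := ih (by omega)
    rw [Mel_succ A hi]
    exact key4 (A.T i) (A.T (i + 1)) (Mel A i)
      (A.rel_braid i hi h2)
      (T_comm_Mel_low A hi (by omega) h2)
      ihh

theorem Tsq {i : ℕ} (h1 : 1 ≤ i) (h2 : i < n) :
    A.T i * A.T i + A.T i = algebraMap F H q * A.T i + algebraMap F H q := by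
  have hq := A.rel_quad i h1 h2
  have expand : (A.T i - algebraMap F H q) * (A.T i + 1)
      = (A.T i * A.T i + A.T i) - (algebraMap F H q * A.T i + algebraMap F H q) := by
    noncomm_ring
  rw [expand] at hq
  exact sub_eq_zero.1 hq

theorem T_comm_L_low (hq0 : q ≠ 0) {i k : ℕ} (hk : 1 ≤ k) (hki : k < i) (hi : i < n) :
    Commute (A.T i) (A.L k) := by
  rw [L_eq_Mel]
  exact Commute.mul_right (hc_comm _ _) (T_comm_Mel_low A hk hki hi)

theorem T_comm_L_high (hq0 : q ≠ 0) {i k : ℕ} (hi : 1 ≤ i) (hik : i + 1 < k) (hk : k ≤ n) :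
    Commute (A.T i) (A.L k) := by
  rw [L_eq_Mel]
  exact Commute.mul_right (hc_comm _ _) (T_comm_Mel_high A hi hik hk)

theorem T_comm_pair (hq0 : q ≠ 0) {i : ℕ} (u0 : F) (h1 : 1 ≤ i) (h2 : i + 1 ≤ n) :
    Commute (A.T i) ((A.L i - algebraMap F H u0) * (A.L (i + 1) - algebraMap F H u0)) := by
  have hin : i < n := by omega
  set a := A.T i with hadef
  set m := Mel A i with hmdef
  have hLi : A.L i = algebraMap F H (q ^ (1 - (i : ℤ))) * m := L_eq_Mel A i
  have hLi1 : A.L (i + 1) = algebraMap F H (q ^ (-(i : ℤ))) * (a * m * a) := by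
    rw [L_eq_Mel, Mel_succ A h1]
    congr 2
    push_cast
    ring
  have hsplit : (q : F) ^ (1 - (i : ℤ)) = q ^ (-(i : ℤ)) * q := by
    rw [show (1 - (i : ℤ)) = (-(i : ℤ)) + 1 by ring, zpow_add₀ hq0, zpow_one]
  -- centrality helpers
  have hcen : ∀ x : F, ∀ z : H, algebraMap F H x * z = z * algebraMap F H x :=
    fun x z => (Algebra.commutes x z)
  have hu : ∀ z : H, algebraMap F H q * z = z * algebraMap F H q := hcen q
  have haa : a * a + a = algebraMap F H q * a + algebraMap F H q := Tsq A h1 hin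
  -- sum commute
  have hsum : Commute a (A.L i + A.L (i + 1)) := by
    have hfold : A.L i + A.L (i + 1)
        = algebraMap F H (q ^ (-(i : ℤ))) * (algebraMap F H q * m + a * m * a) := by
      rw [hLi, hLi1, hsplit, map_mul, mul_add, mul_assoc]
    rw [hfold]
    exact Commute.mul_right (hc_comm _ _)
      (sum_key a m (algebraMap F H q) hu haa)
  -- product commute
  have hprod : Commute a (A.L i * A.L (i + 1)) := by
    have hfold : A.L i * A.L (i + 1)
        = algebraMap F H (q ^ (1 - (i : ℤ))) * algebraMap F H (q ^ (-(i : ℤ)))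
          * (m * (a * m * a)) := by
      rw [hLi, hLi1, mul_assoc, Algebra.left_comm m (q ^ (-(i : ℤ))), ← mul_assoc,
        ← map_mul, map_mul]
    rw [hfold]
    exact Commute.mul_right (Commute.mul_right (hc_comm _ _) (hc_comm _ _))
      (prod_key a m (TMTM A h1 hin))
  -- assemble
  have hexp : (A.L i - algebraMap F H u0) * (A.L (i + 1) - algebraMap F H u0)
      = A.L i * A.L (i + 1) - algebraMap F H u0 * (A.L i + A.L (i + 1))
        + algebraMap F H u0 * algebraMap F H u0 := by
    have h0 : (A.L i - algebraMap F H u0) * (A.L (i + 1) - algebraMap F H u0)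
        = A.L i * A.L (i + 1) - A.L i * algebraMap F H u0 - algebraMap F H u0 * A.L (i + 1)
          + algebraMap F H u0 * algebraMap F H u0 := by noncomm_ring
    rw [h0, ← hcen u0 (A.L i)]
    noncomm_ring
  rw [hexp]
  exact Commute.add_right
    (Commute.sub_right hprod (Commute.mul_right (hc_comm _ _) hsum))
    (Commute.mul_right (hc_comm _ _) (hc_comm _ _))

/-- A truncated product `∏_{k=1}^{m} (L_k - Q)`. -/
def Pfac (A : AKPre F q r n Q H) (m : ℕ) (u0 : F) : H :=
  ((List.range m).map (fun k => A.L (k + 1) - algebraMap F H u0)).prod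

theorem uplus_eq (lam : ℕ → List ℕ) :
    A.uplus lam = ((List.range (r - 1)).map
      (fun t => Pfac A (bar lam (t + 2) 0) (Q (t + 2)))).prod := rfl

theorem T_comm_L (hq0 : q ≠ 0) {i k : ℕ} (h1 : 1 ≤ i) (h2 : i < n)
    (hk1 : 1 ≤ k) (hk : k ≤ n) (hne : k ≠ i ∧ k ≠ i + 1) :
    Commute (A.T i) (A.L k) := by
  rcases Nat.lt_or_ge k i with h | h
  · exact T_comm_L_low A hq0 hk1 h h2
  · exact T_comm_L_high A hq0 h1 (by omega) hk

theorem T_comm_Pfac (hq0 : q ≠ 0) {i m : ℕ} (u0 : F) (h1 : 1 ≤ i) (h2 : i < n)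
    (hm : m ≤ n) (hne : m ≠ i) : Commute (A.T i) (Pfac A m u0) := by
  rcases Nat.lt_or_ge m i with h | h
  · -- all factors commute elementwise
    apply Commute.list_prod_right
    intro y hy
    rw [List.mem_map] at hy
    obtain ⟨k, hk, rfl⟩ := hy
    rw [List.mem_range] at hk
    exact Commute.sub_right (T_comm_L_low A hq0 (by omega) (by omega) h2) (hc_comm _ _)
  · have him : i + 1 ≤ m := by omega
    obtain ⟨i0, rfl⟩ : ∃ i0, i = i0 + 1 := ⟨i - 1, by omega⟩
    have hdec : List.range m
        = (List.range i0 ++ [i0, i0 + 1]) ++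
          (List.range (m - (i0 + 2))).map ((i0 + 2) + ·) := by
      have h1' : List.range m = List.range (i0 + 2) ++
          (List.range (m - (i0 + 2))).map ((i0 + 2) + ·) := by
        rw [← List.range_add]
        congr 1
        omega
      have h2' : List.range (i0 + 2) = List.range i0 ++ [i0, i0 + 1] := by
        rw [show i0 + 2 = i0 + 1 + 1 from rfl, List.range_succ, List.range_succ,
          List.append_assoc]
        rfl
      rw [h1', h2']
    unfold Pfac
    rw [hdec]
    simp only [List.map_append, List.prod_append, List.map_cons, List.map_nil,
      List.prod_cons, List.prod_nil, mul_one]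
    refine Commute.mul_right (Commute.mul_right ?_ ?_) ?_
    · apply Commute.list_prod_right
      intro y hy
      rw [List.mem_map] at hy
      obtain ⟨k, hk, rfl⟩ := hy
      rw [List.mem_range] at hk
      exact Commute.sub_right (T_comm_L_low A hq0 (by omega) (by omega) h2) (hc_comm _ _)
    · exact T_comm_pair A hq0 u0 (by omega) (by omega)
    · apply Commute.list_prod_right
      intro y hy
      rw [List.mem_map, ] at hy
      obtain ⟨z, hz, rfl⟩ := hy
      rw [List.mem_map] at hz
      obtain ⟨k, hk, rfl⟩ := hz
      rw [List.mem_range] at hk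
      exact Commute.sub_right
        (T_comm_L_high A hq0 h1 (by omega) (by omega)) (hc_comm _ _)

theorem T_comm_uplus (hq0 : q ≠ 0) {lam : ℕ → List ℕ} (hlam : IsMulticomp r n lam)
    {i : ℕ} (h1 : 1 ≤ i) (h2 : i < n)
    (hb : ∀ t, bar lam (t + 2) 0 ≠ i) :
    Commute (A.T i) (A.uplus lam) := by
  rw [uplus_eq]
  apply Commute.list_prod_right
  intro y hy
  rw [List.mem_map] at hy
  obtain ⟨t, ht, rfl⟩ := hy
  rw [List.mem_range] at ht
  have hm : bar lam (t + 2) 0 ≤ n := by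
    have := bar0_mono (lam := lam) (show t + 2 ≤ r + 1 by omega)
    rw [bar_rp1 hlam] at this
    exact this
  exact T_comm_Pfac A hq0 _ h1 h2 hm (hb t)

theorem Tw_comm_uplus (hq0 : q ≠ 0) {lam : ℕ → List ℕ} (hlam : IsMulticomp r n lam) :
    ∀ w : Equiv.Perm (Fin n), RowStab r n lam w → Commute (A.uplus lam) (A.Tw w) := by
  suffices hsuf : ∀ N, ∀ w : Equiv.Perm (Fin n), permLen w = N → RowStab r n lam w →
      Commute (A.uplus lam) (A.Tw w) by
    exact fun w hw => hsuf (permLen w) w rfl hw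
  intro N
  induction N using Nat.strong_induction_on with
  | _ N ih =>
    intro w hN hw
    by_cases h0 : permLen w = 0
    · rw [permLen_zero h0, A.Tw_one]
      exact Commute.one_right _
    · obtain ⟨a0, ha, hd⟩ := exists_descent h0
      set σ := Equiv.swap (⟨a0, by omega⟩ : Fin n) ⟨a0 + 1, ha⟩ with hσ
      have hperm : permLen w = permLen (w * σ) + 1 := permLen_descent ha hd
      -- descent letters lie in the same row
      obtain ⟨s1, k1, hs1, hs1r, hk1, hrow1⟩ := row_exists hlam
        (show 1 ≤ a0 + 1 by omega) (show a0 + 1 ≤ n by omega)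
      obtain ⟨s2, k2, hs2, hs2r, hk2, hrow2⟩ := row_exists hlam
        (show 1 ≤ a0 + 2 by omega) (show a0 + 2 ≤ n by omega)
      have him1 : InRow lam s1 k1 (permAct w (a0 + 1)) := by
        have := hw ⟨a0, by omega⟩ s1 k1 hs1 hs1r hk1 (by simpa using hrow1)
        simpa using this
      have him2 : InRow lam s2 k2 (permAct w (a0 + 2)) := by
        have := hw ⟨a0 + 1, ha⟩ s2 k2 hs2 hs2r hk2 (by simpa using hrow2)
        simpa using this
      have hdlt : permAct w (a0 + 2) < permAct w (a0 + 1) := by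
        rw [permAct_eq w ⟨by omega, by omega⟩, permAct_eq w ⟨by omega, by omega⟩]
        have e1 : (⟨a0 + 2 - 1, by omega⟩ : Fin n) = ⟨a0 + 1, ha⟩ := Fin.ext (by simp)
        have e2 : (⟨a0 + 1 - 1, by omega⟩ : Fin n) = ⟨a0, by omega⟩ := Fin.ext (by simp)
        rw [e1, e2]
        have := Fin.lt_def.1 hd
        omega
      have hsame : s1 = s2 ∧ k1 = k2 := by
        by_contra hcc
        have hlex : (s1 < s2 ∨ (s1 = s2 ∧ k1 < k2)) ∨ (s2 < s1 ∨ (s2 = s1 ∧ k2 < k1)) := by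
          omega
        rcases hlex with h | h
        · have hle := bar_le_lt (lam := lam) hs1 h
          have := him1.2
          have := him2.1
          omega
        · have hle := bar_le_lt (lam := lam) hs2 h
          have := hrow2.2
          have := hrow1.1
          omega
      obtain ⟨rfl, rfl⟩ : s1 = s2 ∧ k1 = k2 := hsame
      -- σ stabilizes rows
      have hσstab : RowStab r n lam σ := by
        intro a s' i' hs' hs'r hi' hrowa
        by_cases e1 : (a : ℕ) + 1 = a0 + 1
        · rw [e1] at hrowa ⊢
          obtain ⟨rfl, rfl⟩ := row_unique hs' hs1 hrowa hrow1
          rw [hσ, permAct_swap_fst ha]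
          exact hrow2
        · by_cases e2 : (a : ℕ) + 1 = a0 + 2
          · rw [e2] at hrowa ⊢
            obtain ⟨rfl, rfl⟩ := row_unique hs' hs1 hrowa hrow2
            rw [hσ, permAct_swap_snd ha]
            exact hrow1
          · rw [hσ, permAct_swap_other ha e1 e2]
            exact hrowa
      have hwσ : RowStab r n lam (w * σ) := rowStab_mul hw hσstab
      have hTw : A.Tw w = A.Tw (w * σ) * A.T (a0 + 1) := by
        have hww : (w * σ) * σ = w := by
          rw [mul_assoc, hσ, Equiv.swap_mul_self, mul_one]
        have hlen : permLen ((w * σ) * σ) = permLen (w * σ) + permLen σ := by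
          rw [hww, show permLen σ = 1 from by rw [hσ]; exact permLen_swap ha]
          omega
        have hmul := A.Tw_mul (w * σ) σ hlen
        rw [hww] at hmul
        rw [hmul]
        congr 1
        exact A.Tw_simple (a0 + 1) (by omega) ha
      rw [hTw]
      have hc1 := ih (permLen (w * σ)) (by omega) (w * σ) rfl hwσ
      have hc2 : Commute (A.uplus lam) (A.T (a0 + 1)) := by
        refine (T_comm_uplus A hq0 hlam (i := a0 + 1) (by omega) ha ?_).symm
        intro t
        exact not_boundary hs1 hrow1 hrow2
      exact hc1.mul_right hc2

end Alg

end AKProof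

/-- for every `r`-multicomposition `λ` of `n`, the elements `x_λ` and
`u⁺_λ` of the Ariki–Koike algebra commute. -/
theorem statement3 {F : Type*} [Field F] {q : F} {r n : ℕ} {Q : ℕ → F}
    {H : Type*} [Ring H] [Algebra F H]
    (hq0 : q ≠ 0) (hq1 : q ≠ 1) (hr : 1 ≤ r) (hn : 1 ≤ n)
    (A : AK.AKAlg F q r n Q H)
    (lam : ℕ → List ℕ) (hlam : AK.IsMulticomp r n lam) :
    A.toAKPre.x lam * A.toAKPre.uplus lam = A.toAKPre.uplus lam * A.toAKPre.x lam := by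
  show AK.AKPre.x _ lam * _ = _
  unfold AK.AKPre.x
  rw [Finset.sum_mul, Finset.mul_sum]
  refine Finset.sum_congr rfl fun w hw => ?_
  have hws : AK.RowStab r n lam w := (Finset.mem_filter.1 hw).2
  exact (AKProof.Tw_comm_uplus A.toAKPre hq0 hlam w hws).symm
end
end

section
/- Let ν be an r-multicomposition of n and suppose w ∈ S_n stabilizes the components of t^ν, i.e. each set {ν̄_{(i)}+1, …, ν̄_{(i+1)}} (1 ≤ i ≤ r) is invariant under w. Then T_w u⁺_ν = u⁺_ν T_w in the Ariki–Koike algebra H. -/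
/-!
Background formalization of the Ariki–Koike algebra `H = H_{r,n}` over a field `F`,
with parameters `q, Q_1, …, Q_r` (here `Q : ℕ → F`, 1-indexed), together with the
combinatorics of multicompositions, multipartitions, tableaux, the elements
`L_k`, `T_w`, `x_λ`, `u⁺_λ`, `m_λ`, `m_{st}`, `C(m;η)`, `𝔡^{(s)}_{d,t}`, `𝔩^{(s')}`, etc.

Multicompositions in `r` parts are encoded as functions `ℕ → List ℕ`, the component
`λ^{(s)}` (for `1 ≤ s ≤ r`) being the list `lam s` of its row lengths (so
`λ^{(s)}_i = (lam s).getD (i-1) 0` and `ρ_s(λ) = (lam s).length`).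

Tableaux: a `λ`-tableau `t` is encoded by the permutation `d(t) ∈ S_n` with
`t = t^λ · d(t)`; on 1-indexed letters a permutation `w` of `Fin n` acts via `permAct`.
-/

open scoped Classical

noncomputable section

namespace AK

lemma permAct_fin {n : ℕ} (w : Equiv.Perm (Fin n)) (a : Fin n) :
    permAct w ((a : ℕ) + 1) = (w a : ℕ) + 1 := by
  have h : 1 ≤ (a : ℕ) + 1 ∧ (a : ℕ) + 1 ≤ n := ⟨by omega, by omega⟩
  rw [permAct, dif_pos h]
  have e : (⟨(a : ℕ) + 1 - 1, by omega⟩ : Fin n) = a := by ext; simp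
  rw [e]

lemma permAct_mul {n : ℕ} (u v : Equiv.Perm (Fin n)) (a : ℕ) (h1 : 1 ≤ a) (h2 : a ≤ n) :
    permAct (u * v) a = permAct u (permAct v a) := by
  obtain ⟨b, hb, rfl⟩ : ∃ b : Fin n, True ∧ (b : ℕ) + 1 = a :=
    ⟨⟨a - 1, by omega⟩, trivial, by simp; omega⟩
  rw [permAct_fin, permAct_fin, permAct_fin, Equiv.Perm.mul_apply]

/-- swap of adjacent preserves order off the swapped pair -/
lemma swap_lt_of_ne {n : ℕ} (a a' x y : Fin n) (ha : (a : ℕ) + 1 = (a' : ℕ))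
    (hxy : x < y) (hne : ¬(x = a ∧ y = a')) :
    Equiv.swap a a' x < Equiv.swap a a' y := by
  have hlt : (x : ℕ) < (y : ℕ) := hxy
  simp only [Equiv.swap_apply_def, Fin.lt_def]
  split_ifs with h1 h2 h3 h4 h5 <;>
    simp_all [Fin.ext_iff] <;> omega

lemma permLen_swap {n : ℕ} (a a' : Fin n) (ha : (a : ℕ) + 1 = (a' : ℕ)) :
    permLen (Equiv.swap a a') = 1 := by
  have haa : a < a' := by rw [Fin.lt_def]; omega
  rw [permLen]
  have : (Finset.univ.filter (fun p : Fin n × Fin n =>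
      p.1 < p.2 ∧ Equiv.swap a a' p.2 < Equiv.swap a a' p.1)) = {(a, a')} := by
    ext p
    simp only [Finset.mem_filter, Finset.mem_univ, true_and, Finset.mem_singleton]
    constructor
    · rintro ⟨h1, h2⟩
      by_contra hne
      have : Equiv.swap a a' p.1 < Equiv.swap a a' p.2 := by
        refine swap_lt_of_ne a a' p.1 p.2 ha h1 ?_
        intro ⟨e1, e2⟩
        exact hne (by rw [← e1, ← e2])
      exact absurd this (not_lt.2 (le_of_lt h2))
    · rintro rfl
      refine ⟨haa, ?_⟩
      rw [Equiv.swap_apply_left, Equiv.swap_apply_right]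
      exact haa
  rw [this, Finset.card_singleton]

lemma permLen_mul_swap {n : ℕ} (w : Equiv.Perm (Fin n)) (a a' : Fin n)
    (ha : (a : ℕ) + 1 = (a' : ℕ)) (hd : w a' < w a) :
    permLen (w * Equiv.swap a a') + 1 = permLen w := by
  classical
  set s := Equiv.swap a a' with hs
  have hss : ∀ x, s (s x) = x := fun x => Equiv.swap_apply_self a a' x
  have haa : a < a' := by rw [Fin.lt_def]; omega
  have hmem : (a, a') ∈ (Finset.univ.filter (fun p : Fin n × Fin n =>
      p.1 < p.2 ∧ w p.2 < w p.1)) := by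
    simp only [Finset.mem_filter, Finset.mem_univ, true_and]
    exact ⟨haa, hd⟩
  have hcard : permLen (w * s) =
      ((Finset.univ.filter (fun p : Fin n × Fin n =>
        p.1 < p.2 ∧ w p.2 < w p.1)).erase (a, a')).card := by
    rw [permLen]
    apply Finset.card_bij' (fun p _ => (s p.1, s p.2)) (fun p _ => (s p.1, s p.2))
    · rintro ⟨p1, p2⟩ hp
      rw [Finset.mem_filter] at hp
      simp only [Finset.mem_univ, true_and, Equiv.Perm.mul_apply] at hp
      obtain ⟨h1, h2⟩ := hp
      have hne : ¬(p1 = a ∧ p2 = a') := by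
        rintro ⟨rfl, rfl⟩
        rw [Equiv.swap_apply_left, Equiv.swap_apply_right] at h2
        exact absurd h2 (not_lt.2 (le_of_lt hd))
      refine Finset.mem_erase.2 ⟨?_, ?_⟩
      · intro hc
        have e1 : s p1 = a := congrArg Prod.fst hc
        have e2 : s p2 = a' := congrArg Prod.snd hc
        have : p1 = s a := by rw [← e1, hss]
        rw [Equiv.swap_apply_left] at this
        have h2' : p2 = s a' := by rw [← e2, hss]
        rw [Equiv.swap_apply_right] at h2'
        subst this; subst h2'
        exact absurd h1 (not_lt.2 (le_of_lt haa))
      · simp only [Finset.mem_filter, Finset.mem_univ, true_and]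
        exact ⟨swap_lt_of_ne a a' p1 p2 ha h1 hne, h2⟩
    · rintro ⟨p1, p2⟩ hp
      rw [Finset.mem_erase] at hp
      obtain ⟨hne, hp⟩ := hp
      simp only [Finset.mem_filter, Finset.mem_univ, true_and] at hp ⊢
      obtain ⟨h1, h2⟩ := hp
      have hne' : ¬(p1 = a ∧ p2 = a') := by
        rintro ⟨rfl, rfl⟩; exact hne rfl
      refine ⟨swap_lt_of_ne a a' p1 p2 ha h1 hne', ?_⟩
      simp only [Equiv.Perm.mul_apply, hss]
      exact h2
    · rintro ⟨p1, p2⟩ _; simp [hss]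
    · rintro ⟨p1, p2⟩ _; simp [hss]
  rw [hcard, permLen, Finset.card_erase_of_mem hmem]
  have : 0 < (Finset.univ.filter (fun p : Fin n × Fin n =>
      p.1 < p.2 ∧ w p.2 < w p.1)).card := Finset.card_pos.2 ⟨_, hmem⟩
  omega

lemma perm_eq_one_of_no_descent {n : ℕ} (w : Equiv.Perm (Fin n))
    (h : ∀ k (hk : k + 1 < n), (w ⟨k, by omega⟩ : ℕ) < (w ⟨k + 1, hk⟩ : ℕ)) :
    w = 1 := by
  have hle : ∀ k (hk : k < n), k ≤ (w ⟨k, hk⟩ : ℕ) := by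
    intro k
    induction k with
    | zero => intro _; omega
    | succ m ih =>
      intro hk
      have hm : m < n := by omega
      have := h m hk
      have := ih hm
      omega
  have hsum : ∑ i : Fin n, ((w i : ℕ)) = ∑ i : Fin n, (i : ℕ) :=
    Equiv.sum_comp w (fun i => (i : ℕ))
  have heq : ∀ i : Fin n, (i : ℕ) = (w i : ℕ) := by
    have := (Finset.sum_eq_sum_iff_of_le (s := Finset.univ)
      (f := fun i : Fin n => (i : ℕ)) (g := fun i => (w i : ℕ))
      (fun i _ => hle i i.isLt)).1 (by rw [hsum])
    intro i; exact this i (Finset.mem_univ i)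
  ext i
  exact (heq i).symm



section Comb

lemma bar_zero_eq (nu : ℕ → List ℕ) (s : ℕ) :
    bar nu s 0 = ∑ j ∈ Finset.range (s - 1), (nu (j + 1)).sum := by
  simp [bar]

lemma bar_mono (nu : ℕ → List ℕ) {s s' : ℕ} (h : s ≤ s') : bar nu s 0 ≤ bar nu s' 0 := by
  rw [bar_zero_eq, bar_zero_eq]
  exact Finset.sum_le_sum_of_subset (Finset.range_subset_range.2 (by omega))

lemma bar_succ (nu : ℕ → List ℕ) (s : ℕ) (hs : 1 ≤ s) :
    bar nu (s + 1) 0 = bar nu s 0 + (nu s).sum := by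
  rw [bar_zero_eq, bar_zero_eq, show s + 1 - 1 = (s - 1) + 1 by omega,
    Finset.sum_range_succ, show s - 1 + 1 = s by omega]

lemma sum_Icc_one (f : ℕ → ℕ) (r : ℕ) :
    ∑ s ∈ Finset.Icc 1 r, f s = ∑ j ∈ Finset.range r, f (j + 1) := by
  induction r with
  | zero => simp
  | succ m ih => rw [Finset.sum_range_succ, ← ih, Finset.sum_Icc_succ_top (by omega)]

lemma bar_top {r n : ℕ} {nu : ℕ → List ℕ} (hnu : IsMulticomp r n nu) :
    bar nu (r + 1) 0 = n := by
  rw [bar_zero_eq, show r + 1 - 1 = r from rfl, ← hnu.1, sum_Icc_one]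

lemma bar_len (nu : ℕ → List ℕ) (s : ℕ) :
    bar nu s ((nu s).length) = bar nu s 0 + (nu s).sum := by
  rw [bar, bar]
  simp [List.take_length]

lemma InComp_iff (nu : ℕ → List ℕ) (s b : ℕ) (hs : 1 ≤ s) :
    InComp nu s b ↔ bar nu s 0 < b ∧ b ≤ bar nu (s + 1) 0 := by
  rw [InComp, bar_len, bar_succ nu s hs]

lemma comp_exists {r n : ℕ} {nu : ℕ → List ℕ} (hnu : IsMulticomp r n nu) (hr : 1 ≤ r)
    (b : ℕ) (h1 : 1 ≤ b) (h2 : b ≤ n) : ∃ s, 1 ≤ s ∧ s ≤ r ∧ InComp nu s b := by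
  classical
  have h1P : bar nu 1 0 < b := by
    rw [bar_zero_eq]
    simpa using (show 0 < b by omega)
  set s := Nat.findGreatest (fun s => bar nu s 0 < b) r with hs
  have hs1 : 1 ≤ s := Nat.le_findGreatest hr h1P
  have hsr : s ≤ r := Nat.findGreatest_le r
  have hPs : bar nu s 0 < b := Nat.findGreatest_spec (P := fun s => bar nu s 0 < b) hr h1P
  refine ⟨s, hs1, hsr, (InComp_iff nu s b hs1).2 ⟨hPs, ?_⟩⟩
  rcases Nat.eq_or_lt_of_le hsr with he | hlt
  · rw [he, bar_top hnu]
    exact h2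
  · have hng := Nat.findGreatest_is_greatest (show s < s + 1 by omega)
      (show s + 1 ≤ r by omega)
    simpa [not_lt] using hng

lemma comp_uniq (nu : ℕ → List ℕ) {s s' b : ℕ} (hs : 1 ≤ s) (hs' : 1 ≤ s')
    (h : InComp nu s b) (h' : InComp nu s' b) : s = s' := by
  rcases lt_trichotomy s s' with hlt | he | hlt
  · exfalso
    have h1 := ((InComp_iff nu s b hs).1 h).2
    have h2 := ((InComp_iff nu s' b hs').1 h').1
    have := bar_mono nu (show s + 1 ≤ s' by omega)
    omega
  · exact he
  · exfalso
    have h1 := ((InComp_iff nu s' b hs').1 h').2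
    have h2 := ((InComp_iff nu s b hs).1 h).1
    have := bar_mono nu (show s' + 1 ≤ s by omega)
    omega

end Comb

namespace AKPre

variable {F : Type*} [Field F] {q : F} {r n : ℕ} {Q : ℕ → F}
  {H : Type*} [Ring H] [Algebra F H]

-- ============ new lemmas ============

lemma commute_aM (x : H) (c : F) : Commute x (algebraMap F H c) :=
  (Algebra.commutes c x).symm

lemma L_smul (A : AKPre F q r n Q H) (k : ℕ) : A.L k = (q ^ (1 - (k : ℤ))) •
    (((List.range (k - 1)).reverse.map (fun i => A.T (i + 1))).prod * A.T 0 *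
      ((List.range (k - 1)).map (fun i => A.T (i + 1))).prod) := by
  rw [L, Algebra.smul_def]

lemma L_one (A : AKPre F q r n Q H) : A.L 1 = A.T 0 := by
  rw [L_smul]
  simp

lemma commute_L_of (A : AKPre F q r n Q H) (x : H) (k : ℕ) (h0 : Commute x (A.T 0))
    (h : ∀ m, m + 1 < k → Commute x (A.T (m + 1))) : Commute x (A.L k) := by
  rw [L_smul]
  refine Commute.smul_right ?_ _
  have hR : Commute x (((List.range (k - 1)).reverse.map (fun i => A.T (i + 1))).prod) := by
    apply Commute.list_prod_right
    intro y hy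
    simp only [List.mem_map, List.mem_reverse, List.mem_range] at hy
    obtain ⟨i, hi, rfl⟩ := hy
    exact h i (by omega)
  have hS : Commute x (((List.range (k - 1)).map (fun i => A.T (i + 1))).prod) := by
    apply Commute.list_prod_right
    intro y hy
    simp only [List.mem_map, List.mem_range] at hy
    obtain ⟨i, hi, rfl⟩ := hy
    exact h i (by omega)
  exact (hR.mul_right h0).mul_right hS

lemma commute_T_L_small (A : AKPre F q r n Q H) (j k : ℕ) (hk : 1 ≤ k) (hkj : k < j)
    (hj : j < n) : Commute (A.T j) (A.L k) := by
  apply A.commute_L_of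
  · exact (A.rel_comm 0 j (by omega) hj).symm
  · intro m hm
    exact (A.rel_comm (m + 1) j (by omega) hj).symm

lemma L_succ (A : AKPre F q r n Q H) (hq0 : q ≠ 0) (k : ℕ) (hk : 1 ≤ k) :
    A.L (k + 1) = q⁻¹ • (A.T k * A.L k * A.T k) := by
  rw [L_smul, L_smul]
  have hrange : List.range (k + 1 - 1) = List.range (k - 1) ++ [k - 1] := by
    rw [show k + 1 - 1 = (k - 1) + 1 by omega, List.range_succ]
  rw [hrange]
  simp only [List.map_append, List.reverse_append, List.prod_append, List.map_cons,
    List.map_nil, List.prod_cons, List.prod_nil, List.reverse_cons, List.reverse_nil,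
    List.nil_append, mul_one]
  rw [show k - 1 + 1 = k by omega]
  simp only [smul_smul, mul_smul_comm, smul_mul_assoc]
  congr 1
  · rw [← zpow_neg_one, ← zpow_add₀ hq0]
    congr 1
    push_cast
    ring
  · simp only [mul_assoc]

lemma braidJM (A : AKPre F q r n Q H) (hq0 : q ≠ 0) : ∀ i, 1 ≤ i → i < n →
    ∀ X : H, A.T i * (A.L i * (A.T i * (A.L i * X)))
      = A.L i * (A.T i * (A.L i * (A.T i * X))) := by
  intro i
  induction i with
  | zero => omega
  | succ m ih =>
    intro h1 h2 X
    rcases Nat.eq_zero_or_pos m with hm | hm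
    · subst hm
      rw [L_one]
      have hrel := A.rel_T0T1 (by omega)
      calc A.T 1 * (A.T 0 * (A.T 1 * (A.T 0 * X)))
          = (A.T 1 * A.T 0 * A.T 1 * A.T 0) * X := by simp only [mul_assoc]
        _ = (A.T 0 * A.T 1 * A.T 0 * A.T 1) * X := by rw [← hrel]
        _ = A.T 0 * (A.T 1 * (A.T 0 * (A.T 1 * X))) := by simp only [mul_assoc]
    · set t := A.T m with htd
      set u := A.T (m + 1) with hud
      set l := A.L m with hld
      have hLs : A.L (m + 1) = q⁻¹ • (t * l * t) := A.L_succ hq0 m hm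
      have hbr := A.rel_braid m hm h2
      have hb : ∀ Y : H, t * (u * (t * Y)) = u * (t * (u * Y)) := by
        intro Y
        calc t * (u * (t * Y)) = (t * u * t) * Y := by simp only [mul_assoc]
          _ = (u * t * u) * Y := by rw [hbr]
          _ = u * (t * (u * Y)) := by simp only [mul_assoc]
      have hb' : ∀ Y : H, u * (t * (u * Y)) = t * (u * (t * Y)) := fun Y => (hb Y).symm
      have hcl : Commute u l := A.commute_T_L_small (m + 1) m hm (by omega) h2
      have hc : ∀ Y : H, u * (l * Y) = l * (u * Y) := by
        intro Y
        calc u * (l * Y) = (u * l) * Y := by rw [mul_assoc]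
          _ = (l * u) * Y := by rw [hcl.eq]
          _ = l * (u * Y) := by rw [mul_assoc]
      have hIH : ∀ Y : H, t * (l * (t * (l * Y))) = l * (t * (l * (t * Y))) :=
        ih hm (by omega)
      rw [hLs]
      simp only [smul_mul_assoc, mul_smul_comm, smul_smul, mul_assoc]
      congr 1
      conv_lhs => rw [hb, hc, ← hc, hb', hIH]
      conv_rhs => rw [hb, hc, ← hc, hb']

lemma commute_T_L_large (A : AKPre F q r n Q H) (hq0 : q ≠ 0) (j : ℕ) (hj : 1 ≤ j) :
    ∀ k, j + 2 ≤ k → k ≤ n → Commute (A.T j) (A.L k) := by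
  intro k
  induction k with
  | zero => omega
  | succ m ihm =>
    intro hk hkn
    rcases Nat.lt_or_ge (j + 2) (m + 1) with hlt | hge
    · have hm1 : 1 ≤ m := by omega
      rw [A.L_succ hq0 m hm1]
      have h1 : Commute (A.T j) (A.T m) := A.rel_comm j m (by omega) (by omega)
      exact ((h1.mul_right (ihm (by omega) (by omega))).mul_right h1).smul_right _
    · have he : m = j + 1 := by omega
      subst he
      rw [A.L_succ hq0 (j + 1) (by omega), A.L_succ hq0 j hj]
      set t := A.T j with htd
      set u := A.T (j + 1) with hud
      set l := A.L j with hld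
      have hbr := A.rel_braid j hj (by omega)
      have hb : ∀ Y : H, t * (u * (t * Y)) = u * (t * (u * Y)) := by
        intro Y
        calc t * (u * (t * Y)) = (t * u * t) * Y := by simp only [mul_assoc]
          _ = (u * t * u) * Y := by rw [hbr]
          _ = u * (t * (u * Y)) := by simp only [mul_assoc]
      have hb' : ∀ Y : H, u * (t * (u * Y)) = t * (u * (t * Y)) := fun Y => (hb Y).symm
      have hcl : Commute u l := A.commute_T_L_small (j + 1) j hj (by omega) (by omega)
      have hc : ∀ Y : H, u * (l * Y) = l * (u * Y) := by
        intro Y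
        calc u * (l * Y) = (u * l) * Y := by rw [mul_assoc]
          _ = (l * u) * Y := by rw [hcl.eq]
          _ = l * (u * Y) := by rw [mul_assoc]
      refine Commute.smul_right ?_ _
      have key : ∀ Y : H, t * (u * (t * (l * (t * (u * Y)))))
          = u * (t * (l * (t * (u * (t * Y))))) := by
        intro Y
        conv_lhs => rw [hb, hc, hb']
      have key1 := key 1
      simp only [mul_one] at key1
      show t * (u * (q⁻¹ • (t * l * t)) * u) = (u * (q⁻¹ • (t * l * t)) * u) * t
      simp only [mul_smul_comm, smul_mul_assoc, mul_assoc]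
      rw [key1]

section Quad

variable (A : AKPre F q r n Q H)

lemma smul_cancel (hq0 : q ≠ 0) (a b : H) (h : q • a = q • b) : a = b := by
  have := congrArg (fun x : H => q⁻¹ • x) h
  simpa [smul_smul, inv_mul_cancel₀ hq0] using this

lemma TLT (hq0 : q ≠ 0) (i : ℕ) (hi : 1 ≤ i) : A.T i * A.L i * A.T i = q • A.L (i + 1) := by
  rw [A.L_succ hq0 i hi, smul_smul, mul_inv_cancel₀ hq0, one_smul]

lemma Tsq (i : ℕ) (h1 : 1 ≤ i) (h2 : i < n) :
    A.T i * A.T i = q • A.T i + q • (1 : H) - A.T i := by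
  have h := A.rel_quad i h1 h2
  have e : (A.T i - algebraMap F H q) * (A.T i + 1)
      = A.T i * A.T i + A.T i - (q • A.T i + q • (1 : H)) := by
    simp only [Algebra.smul_def, mul_one]
    noncomm_ring
  rw [e] at h
  have h2' := sub_eq_zero.mp h
  exact eq_sub_of_add_eq h2'

lemma commute_T_sum (hq0 : q ≠ 0) (i : ℕ) (h1 : 1 ≤ i) (h2 : i < n) :
    Commute (A.T i) (A.L i + A.L (i + 1)) := by
  set t := A.T i with htd
  set l := A.L i with hld
  set l' := A.L (i + 1) with hld'
  have hTLT : t * l * t = q • l' := A.TLT hq0 i h1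
  have htt : t * t = q • t + q • (1 : H) - t := A.Tsq i h1 h2
  have e1 : t * l' = q • l' - l' + l * t := by
    apply smul_cancel hq0
    calc q • (t * l') = t * (q • l') := (mul_smul_comm q t l').symm
      _ = t * (t * l * t) := by rw [← hTLT]
      _ = (t * t) * (l * t) := by simp only [mul_assoc]
      _ = (q • t + q • (1 : H) - t) * (l * t) := by rw [htt]
      _ = q • (t * (l * t)) + q • (l * t) - t * (l * t) := by
          rw [sub_mul, add_mul, smul_mul_assoc, smul_mul_assoc, one_mul]
      _ = q • (q • l') + q • (l * t) - q • l' := by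
          rw [show t * (l * t) = t * l * t from (mul_assoc t l t).symm, hTLT]
      _ = q • (q • l' - l' + l * t) := by rw [smul_add, smul_sub]; abel
  have e2 : l' * t = q • l' - l' + t * l := by
    apply smul_cancel hq0
    calc q • (l' * t) = (q • l') * t := (smul_mul_assoc q l' t).symm
      _ = (t * l * t) * t := by rw [← hTLT]
      _ = (t * l) * (t * t) := by simp only [mul_assoc]
      _ = (t * l) * (q • t + q • (1 : H) - t) := by rw [htt]
      _ = q • (t * l * t) + q • (t * l) - t * l * t := by
          rw [mul_sub, mul_add, mul_smul_comm, mul_smul_comm, mul_one]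
      _ = q • (q • l') + q • (t * l) - q • l' := by rw [hTLT]
      _ = q • (q • l' - l' + t * l) := by rw [smul_add, smul_sub]; abel
  show t * (l + l') = (l + l') * t
  rw [mul_add, add_mul, e1, e2]
  abel

lemma commute_T_prodLL (hq0 : q ≠ 0) (i : ℕ) (h1 : 1 ≤ i) (h2 : i < n) :
    Commute (A.T i) (A.L i * A.L (i + 1)) := by
  set t := A.T i with htd
  set l := A.L i with hld
  set l' := A.L (i + 1) with hld'
  have hTLT : t * l * t = q • l' := A.TLT hq0 i h1
  have hJM := A.braidJM hq0 i h1 h2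
  show t * (l * l') = (l * l') * t
  apply smul_cancel hq0
  calc q • (t * (l * l')) = t * (l * (q • l')) := by rw [mul_smul_comm, mul_smul_comm]
    _ = t * (l * (t * l * t)) := by rw [← hTLT]
    _ = t * (l * (t * (l * t))) := by simp only [mul_assoc]
    _ = l * (t * (l * (t * t))) := hJM t
    _ = (l * (t * l * t)) * t := by simp only [mul_assoc]
    _ = (l * (q • l')) * t := by rw [hTLT]
    _ = q • ((l * l') * t) := by rw [mul_smul_comm, smul_mul_assoc]

lemma commute_T_pair (hq0 : q ≠ 0) (i : ℕ) (c : F) (h1 : 1 ≤ i) (h2 : i < n) :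
    Commute (A.T i) ((A.L i - algebraMap F H c) * (A.L (i + 1) - algebraMap F H c)) := by
  set e := algebraMap F H c with hed
  set l := A.L i with hld
  set l' := A.L (i + 1) with hld'
  have hex : (l - e) * (l' - e) = l * l' - e * (l + l') + e * e := by
    have hcm : l * e = e * l := (Algebra.commutes c l).symm
    have expand : (l - e) * (l' - e) = l * l' - l * e - e * l' + e * e := by noncomm_ring
    rw [expand, hcm, mul_add]
    abel
  rw [hex]
  exact ((A.commute_T_prodLL hq0 i h1 h2).sub_right
      ((commute_aM (A.T i) c).mul_right (A.commute_T_sum hq0 i h1 h2))).add_right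
    ((commute_aM (A.T i) c).mul_right (commute_aM (A.T i) c))

lemma commute_T_prodL (hq0 : q ≠ 0) (i m : ℕ) (c : F) (h1 : 1 ≤ i) (h2 : i < n) (hmn : m ≤ n)
    (hmi : m ≠ i) :
    Commute (A.T i) (((List.range m).map (fun k => A.L (k + 1) - algebraMap F H c)).prod) := by
  rcases Nat.lt_or_ge m i with hlt | hge
  · apply Commute.list_prod_right
    intro y hy
    simp only [List.mem_map, List.mem_range] at hy
    obtain ⟨k, hk, rfl⟩ := hy
    exact (A.commute_T_L_small i (k + 1) (by omega) (by omega) h2).sub_right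
      (commute_aM _ c)
  · have hgt : i < m := by omega
    have hr2 : List.range 2 = [0, 1] := rfl
    have he1 : List.range m = List.range (i + 1)
        ++ (List.range (m - (i + 1))).map (fun x => (i + 1) + x) := by
      conv_lhs => rw [show m = (i + 1) + (m - (i + 1)) by omega]
      rw [List.range_add]
    have he2 : List.range (i + 1) = List.range (i - 1) ++ [i - 1, i] := by
      rw [show i + 1 = (i - 1) + 2 by omega, List.range_add, hr2]
      simp only [List.map_cons, List.map_nil, add_zero]
      rw [show i - 1 + 1 = i by omega]
    have hsplit : List.range m = List.range (i - 1) ++ [i - 1, i]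
        ++ (List.range (m - (i + 1))).map (fun x => (i + 1) + x) := by
      rw [he1, he2]
    rw [hsplit]
    simp only [List.map_append, List.prod_append]
    refine Commute.mul_right (Commute.mul_right ?_ ?_) ?_
    · apply Commute.list_prod_right
      intro y hy
      simp only [List.mem_map, List.mem_range] at hy
      obtain ⟨k, hk, rfl⟩ := hy
      exact (A.commute_T_L_small i (k + 1) (by omega) (by omega) h2).sub_right
        (commute_aM _ c)
    · simp only [List.map_cons, List.map_nil, List.prod_cons, List.prod_nil, mul_one]
      rw [show i - 1 + 1 = i by omega]
      exact A.commute_T_pair hq0 i c h1 h2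
    · apply Commute.list_prod_right
      intro y hy
      simp only [List.mem_map, List.mem_range] at hy
      obtain ⟨a, ⟨x, hx, rfl⟩, rfl⟩ := hy
      refine Commute.sub_right ?_ (commute_aM _ c)
      exact A.commute_T_L_large hq0 i h1 (i + 1 + x + 1) (by omega) (by omega)

lemma commute_T_uplus (hq0 : q ≠ 0) (nu : ℕ → List ℕ) (i : ℕ) (h1 : 1 ≤ i) (h2 : i < n)
    (hb : ∀ t, t < r - 1 → bar nu (t + 2) 0 ≤ n ∧ bar nu (t + 2) 0 ≠ i) :
    Commute (A.T i) (A.uplus nu) := by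
  rw [uplus]
  apply Commute.list_prod_right
  intro y hy
  simp only [List.mem_map, List.mem_range] at hy
  obtain ⟨t, ht, rfl⟩ := hy
  exact A.commute_T_prodL hq0 i _ _ h1 h2 (hb t ht).1 (hb t ht).2

end Quad


end AKPre

end AK

/-- if `w ∈ S_n` stabilizes the components of `t^ν` then
`T_w u⁺_ν = u⁺_ν T_w`. -/
theorem statement9 {F : Type*} [Field F] {q : F} {r n : ℕ} {Q : ℕ → F}
    {H : Type*} [Ring H] [Algebra F H]
    (hq0 : q ≠ 0) (hq1 : q ≠ 1) (hr : 1 ≤ r) (hn : 1 ≤ n)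
    (A : AK.AKAlg F q r n Q H)
    (nu : ℕ → List ℕ) (hnu : AK.IsMulticomp r n nu) (w : Equiv.Perm (Fin n))
    (hw : ∀ a : Fin n, ∀ i, 1 ≤ i → i ≤ r → AK.InComp nu i ((a : ℕ) + 1) →
        AK.InComp nu i (AK.permAct w ((a : ℕ) + 1))) :
    A.toAKPre.Tw w * A.toAKPre.uplus nu = A.toAKPre.uplus nu * A.toAKPre.Tw w := by
  suffices key : ∀ N (w' : Equiv.Perm (Fin n)), AK.permLen w' = N →
      (∀ a : Fin n, ∀ i, 1 ≤ i → i ≤ r → AK.InComp nu i ((a : ℕ) + 1) →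
        AK.InComp nu i (AK.permAct w' ((a : ℕ) + 1))) →
      Commute (A.toAKPre.Tw w') (A.toAKPre.uplus nu) by
    exact key (AK.permLen w) w rfl hw
  intro N
  induction N using Nat.strong_induction_on with
  | _ N ih =>
    intro w' hlen hstab
    by_cases hdesc : ∃ a : Fin n, ∃ han : (a : ℕ) + 1 < n,
        w' ⟨(a : ℕ) + 1, han⟩ < w' a
    · obtain ⟨a, han, hd⟩ := hdesc
      set a' : Fin n := ⟨(a : ℕ) + 1, han⟩ with ha'
      have ha'v : (a' : ℕ) = (a : ℕ) + 1 := rfl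
      have ha'lt := a'.isLt
      set sw := Equiv.swap a a' with hsw
      obtain ⟨s1, hs11, hs1r, hs1⟩ := AK.comp_exists hnu hr ((a : ℕ) + 1)
        (by omega) (by omega)
      obtain ⟨s2, hs21, hs2r, hs2⟩ := AK.comp_exists hnu hr ((a' : ℕ) + 1)
        (by omega) (by omega)
      have hdval : (w' a' : ℕ) < (w' a : ℕ) := hd
      have hs12 : s1 = s2 := by
        by_contra hne
        have hlt : s1 < s2 := by
          rcases lt_trichotomy s1 s2 with h | h | h
          · exact h
          · exact absurd h hne
          · exfalso
            have e1 := ((AK.InComp_iff nu s1 _ hs11).1 hs1).1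
            have e2 := ((AK.InComp_iff nu s2 _ hs21).1 hs2).2
            have := AK.bar_mono nu (show s2 + 1 ≤ s1 by omega)
            omega
        have hw1 := hstab a s1 hs11 hs1r hs1
        have hw2 := hstab a' s2 hs21 hs2r hs2
        rw [AK.permAct_fin] at hw1 hw2
        have e1 := ((AK.InComp_iff nu s1 _ hs11).1 hw1).2
        have e2 := ((AK.InComp_iff nu s2 _ hs21).1 hw2).1
        have hmono := AK.bar_mono nu (show s1 + 1 ≤ s2 by omega)
        omega
      subst hs12
      have hbound : ∀ t, t < r - 1 →
          AK.bar nu (t + 2) 0 ≤ n ∧ AK.bar nu (t + 2) 0 ≠ (a : ℕ) + 1 := by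
        intro t ht
        have e1 := (AK.InComp_iff nu s1 _ hs11).1 hs1
        have e2 := (AK.InComp_iff nu s1 _ hs11).1 hs2
        constructor
        · have := AK.bar_mono nu (show t + 2 ≤ r + 1 by omega)
          rw [AK.bar_top hnu] at this
          exact this
        · rcases Nat.lt_or_ge (t + 2) (s1 + 1) with hc | hc
          · have := AK.bar_mono nu (show t + 2 ≤ s1 by omega)
            omega
          · have := AK.bar_mono nu (show s1 + 1 ≤ t + 2 by omega)
            omega
      have hswstab : ∀ b : Fin n, ∀ j, 1 ≤ j → j ≤ r → AK.InComp nu j ((b : ℕ) + 1) →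
          AK.InComp nu j ((sw b : ℕ) + 1) := by
        intro b j hj1 hjr hb
        rcases eq_or_ne b a with rfl | hba
        · rw [hsw, Equiv.swap_apply_left]
          have hj : j = s1 := AK.comp_uniq nu hj1 hs11 hb hs1
          rw [hj]
          exact hs2
        · rcases eq_or_ne b a' with rfl | hba'
          · rw [hsw, Equiv.swap_apply_right]
            have hj : j = s1 := AK.comp_uniq nu hj1 hs21 hb hs2
            rw [hj]
            exact hs1
          · rw [hsw, Equiv.swap_apply_of_ne_of_ne hba hba']
            exact hb
      have hstab' : ∀ b : Fin n, ∀ j, 1 ≤ j → j ≤ r → AK.InComp nu j ((b : ℕ) + 1) →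
          AK.InComp nu j (AK.permAct (w' * sw) ((b : ℕ) + 1)) := by
        intro b j hj1 hjr hb
        rw [AK.permAct_fin, Equiv.Perm.mul_apply, ← AK.permAct_fin w' (sw b)]
        exact hstab (sw b) j hj1 hjr (hswstab b j hj1 hjr hb)
      have hlen1 : AK.permLen (w' * sw) + 1 = AK.permLen w' :=
        AK.permLen_mul_swap w' a a' rfl hd
      have hws : (w' * sw) * sw = w' := by
        rw [mul_assoc, hsw, Equiv.swap_mul_self, mul_one]
      have hIH : Commute (A.toAKPre.Tw (w' * sw)) (A.toAKPre.uplus nu) :=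
        ih (AK.permLen (w' * sw)) (by omega) (w' * sw) rfl hstab'
      have hLadd : AK.permLen ((w' * sw) * sw) = AK.permLen (w' * sw) + AK.permLen sw := by
        rw [hws, AK.permLen_swap a a' rfl]
        omega
      have hTws : A.toAKPre.Tw w' = A.toAKPre.Tw (w' * sw) * A.toAKPre.Tw sw := by
        conv_lhs => rw [← hws]
        exact A.toAKPre.Tw_mul (w' * sw) sw hLadd
      have eswap : sw = Equiv.swap
          (⟨(a : ℕ) + 1 - 1, lt_of_le_of_lt (Nat.sub_le ((a : ℕ) + 1) 1) han⟩ : Fin n)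
          ⟨(a : ℕ) + 1, han⟩ := by
        have e1 : (⟨(a : ℕ) + 1 - 1,
            lt_of_le_of_lt (Nat.sub_le ((a : ℕ) + 1) 1) han⟩ : Fin n) = a := by
          ext; simp
        rw [hsw, ha', e1]
      have hTsimple : A.toAKPre.Tw sw = A.toAKPre.T ((a : ℕ) + 1) := by
        rw [eswap]
        exact A.toAKPre.Tw_simple ((a : ℕ) + 1) (by omega) han
      have hTi : Commute (A.toAKPre.T ((a : ℕ) + 1)) (A.toAKPre.uplus nu) :=
        A.toAKPre.commute_T_uplus hq0 nu ((a : ℕ) + 1) (by omega) han hbound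
      rw [hTws, hTsimple]
      exact hIH.mul_left hTi
    · push_neg at hdesc
      have hone : w' = 1 := by
        apply AK.perm_eq_one_of_no_descent
        intro k hk
        have hne : w' ⟨k, by omega⟩ ≠ w' ⟨k + 1, hk⟩ := by
          intro hcon
          have hinj := w'.injective hcon
          simp [Fin.ext_iff] at hinj
        have hle : w' ⟨k, by omega⟩ ≤ w' ⟨k + 1, hk⟩ := hdesc ⟨k, by omega⟩ hk
        have hlt : w' ⟨k, by omega⟩ < w' ⟨k + 1, hk⟩ := lt_of_le_of_ne hle hne
        exact hlt
      rw [hone, A.toAKPre.Tw_one]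
      exact Commute.one_left _
end
end
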